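/- arXiv:2112.11871 — 7 statements merged into one kernel-verified Lean document; each statement's English description precedes it below -/
import Mathlib

section
/- Let f : I → ℝ be twice differentiable on I with nowhere vanishing first derivative and let p = (p_1,…,p_n) : I → ℝ_+^n. If i, j ∈ {1,…,n} with i ≠ j and p_i, p_j are differentiable on I, then the mixed second-order partial derivative ∂_i∂_j A_{f,p} exists at every diagonal point of I^n and (∂_i∂_j A_{f,p})^Δ = −(p_i p_j)'/p_0² − (p_i p_j/p_0²)·(f''/f') on I. -/
open Set Function Real

/-- The `n`-variable generalized Bajraktarević mean `A_{f,p}` on the interval `I`: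
`A_{f,p}(x) = f⁻¹((∑ pᵢ(xᵢ) f(xᵢ)) / (∑ pᵢ(xᵢ)))`. -/
noncomputable def bajMean {n : ℕ} (I : Set ℝ) (f : ℝ → ℝ) (p : Fin n → ℝ → ℝ)
    (x : Fin n → ℝ) : ℝ :=
  Function.invFunOn f I ((∑ i, p i (x i) * f (x i)) / (∑ i, p i (x i)))

/-- The `i`-th first-order partial derivative of `Φ : Iⁿ → ℝ`. -/
noncomputable def pder {n : ℕ} (Φ : (Fin n → ℝ) → ℝ) (i : Fin n) (y : Fin n → ℝ) : ℝ :=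
  deriv (fun t => Φ (Function.update y i t)) (y i)

/-- The second-order partial derivative `∂ᵢ∂ⱼΦ`. -/
noncomputable def pder2 {n : ℕ} (Φ : (Fin n → ℝ) → ℝ) (i j : Fin n) :
    (Fin n → ℝ) → ℝ :=
  pder (pder Φ j) i

/-- `M` is locally smaller than `N`: there is an open set `U ⊆ Iⁿ` containing the
diagonal of `Iⁿ` on which `M ≤ N`. -/
def LocallySmaller {n : ℕ} (I : Set ℝ) (M N : (Fin n → ℝ) → ℝ) : Prop :=
  ∃ U : Set (Fin n → ℝ), IsOpen U ∧ U ⊆ {x | ∀ i, x i ∈ I} ∧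
    (∀ x ∈ I, (fun _ => x) ∈ U) ∧ ∀ x ∈ U, M x ≤ N x

section auxLemmas

open Filter Topology

private theorem aux_sum {n : ℕ} (i j : Fin n) (hij : i ≠ j) (q : Fin n → ℝ → ℝ)
    (x t s : ℝ) :
    ∑ k, q k (Function.update (Function.update (fun _ => x) i t) j s k) =
      q i t + q j s + ∑ k ∈ (Finset.univ.erase j).erase i, q k x := by
  classical
  have h1 : (fun k => q k (Function.update (Function.update (fun _ => x) i t) j s k)) =
      Function.update (fun k => q k (Function.update (fun _ : Fin n => x) i t k)) j (q j s) := by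
    funext k
    by_cases hk : k = j
    · subst hk; simp
    · simp [Function.update_of_ne hk]
  have h2 : (fun k => q k (Function.update (fun _ : Fin n => x) i t k)) =
      Function.update (fun k => q k x) i (q i t) := by
    funext k
    by_cases hk : k = i
    · subst hk; simp
    · simp [Function.update_of_ne hk]
  rw [h1, Finset.sum_update_of_mem (Finset.mem_univ j), h2,
    Finset.sum_update_of_mem (by simp [Finset.mem_sdiff, hij] : i ∈ Finset.univ \ {j}),
    Finset.erase_eq, Finset.erase_eq]
  ring

private theorem aux_inv (I : Set ℝ) (hIopen : IsOpen I)
    (f f' f'' : ℝ → ℝ)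
    (hfmono : StrictMonoOn f I ∨ StrictAntiOn f I)
    (hf : ∀ x ∈ I, HasDerivAt f (f' x) x)
    (hf' : ∀ x ∈ I, HasDerivAt f' (f'' x) x)
    (hf'0 : ∀ x ∈ I, f' x ≠ 0) :
    ∀ y ∈ I, HasDerivAt (Function.invFunOn f I) (f' y)⁻¹ (f y) ∧
      (∀ᶠ z in 𝓝 (f y), Function.invFunOn f I z ∈ I ∧ f (Function.invFunOn f I z) = z) := by
  classical
  have hinj : Set.InjOn f I := hfmono.elim StrictMonoOn.injOn StrictAntiOn.injOn
  intro y hy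
  have hs : HasStrictDerivAt f (f' y) y := by
    refine hasStrictDerivAt_of_hasDerivAt_of_continuousAt ?_ (hf' y hy).continuousAt
    filter_upwards [hIopen.mem_nhds hy] with z hz using hf z hz
  have hne := hf'0 y hy
  set h : ℝ → ℝ := hs.localInverse f (f' y) y hne with hhdef
  have hF := hs.hasStrictFDerivAt_equiv hne
  have hri : ∀ᶠ z in 𝓝 (f y), f (h z) = z := hF.eventually_right_inverse
  have hca : ContinuousAt h (f y) := hF.localInverse_continuousAt
  have hhy : h (f y) = y := hF.localInverse_apply_image
  have hmem : ∀ᶠ z in 𝓝 (f y), h z ∈ I := by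
    have : I ∈ 𝓝 (h (f y)) := hIopen.mem_nhds (by rw [hhy]; exact hy)
    exact hca this
  have heq : ∀ᶠ z in 𝓝 (f y), Function.invFunOn f I z = h z := by
    filter_upwards [hri, hmem] with z h1 h2
    exact hinj (Function.invFunOn_mem ⟨h z, h2, h1⟩) h2
      (by rw [Function.invFunOn_eq ⟨h z, h2, h1⟩, h1])
  constructor
  · exact ((hs.to_localInverse hne).hasDerivAt).congr_of_eventuallyEq heq
  · filter_upwards [hri, hmem, heq] with z h1 h2 h3
    exact ⟨h3 ▸ h2, by rw [h3, h1]⟩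

end auxLemmas

/-- Lemma DB (2b): if `f` is twice differentiable on `I` with nonvanishing first
derivative, `p : I → ℝ₊ⁿ`, `i ≠ j` and `pᵢ, pⱼ` are differentiable on `I`, then
`∂ᵢ∂ⱼ A_{f,p}` exists at every diagonal point of `Iⁿ` and
`(∂ᵢ∂ⱼ A_{f,p})^Δ = -(pᵢpⱼ)'/p₀² - (pᵢpⱼ/p₀²)·(f''/f')`. -/
theorem stmt2 {n : ℕ} (hn : 2 ≤ n) (I : Set ℝ) (hIopen : IsOpen I)
    (hIconn : I.OrdConnected) (hIne : I.Nonempty)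
    (f f' f'' : ℝ → ℝ) (p p' : Fin n → ℝ → ℝ)
    (hfmono : StrictMonoOn f I ∨ StrictAntiOn f I)
    (hf : ∀ x ∈ I, HasDerivAt f (f' x) x)
    (hf' : ∀ x ∈ I, HasDerivAt f' (f'' x) x)
    (hf'0 : ∀ x ∈ I, f' x ≠ 0)
    (hp : ∀ j, ∀ x ∈ I, 0 < p j x)
    (i j : Fin n) (hij : i ≠ j)
    (hpi : ∀ x ∈ I, HasDerivAt (p i) (p' i x) x)
    (hpj : ∀ x ∈ I, HasDerivAt (p j) (p' j x) x) :
    ∀ x ∈ I,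
      DifferentiableAt ℝ
        (fun t => pder (bajMean I f p) j (Function.update (fun _ => x) i t)) x ∧
      pder2 (bajMean I f p) i j (fun _ => x) =
        -((p' i x * p j x + p i x * p' j x) / (∑ k, p k x) ^ 2) -
          (p i x * p j x / (∑ k, p k x) ^ 2) * (f'' x / f' x) := by
  classical
  intro x hx
  have hinj : Set.InjOn f I := hfmono.elim StrictMonoOn.injOn StrictAntiOn.injOn
  set g : ℝ → ℝ := Function.invFunOn f I with hgdef
  have L1 := aux_inv I hIopen f f' f'' hfmono hf hf' hf'0
  -- the set V of points near f x where g is a differentiable right inverse of f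
  have L2 : ∀ᶠ z in nhds (f x), HasDerivAt g (f' (g z))⁻¹ z := by
    filter_upwards [(L1 x hx).2] with z hz
    have h := (L1 (g z) hz.1).1
    rwa [hz.2] at h
  obtain ⟨V, hVsub', hVo, hfxV⟩ := mem_nhds_iff.mp L2
  have hVsub : ∀ z ∈ V, HasDerivAt g (f' (g z))⁻¹ z := fun z hz => hVsub' hz
  -- the constant c
  obtain ⟨c, hc⟩ : ∃ c : ℝ, c = ∑ k ∈ (Finset.univ.erase j).erase i, p k x := ⟨_, rfl⟩
  have hc0 : 0 ≤ c := by
    rw [hc]; exact Finset.sum_nonneg fun k _ => (hp k x hx).le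
  have hP0 : ∑ k, p k x = p i x + p j x + c := by
    have hu : Function.update (Function.update (fun _ : Fin n => x) i x) j x
        = fun _ => x := by
      funext k
      rcases eq_or_ne k j with rfl | hkj
      · simp
      · rw [Function.update_of_ne hkj]
        rcases eq_or_ne k i with rfl | hki
        · simp
        · rw [Function.update_of_ne hki]
    have h2 := aux_sum i j hij p x x x
    rw [hu] at h2
    simp only at h2
    rw [h2, ← hc]
  have hD : ∀ t ∈ I, 0 < p i t + p j x + c := fun t ht =>
    add_pos_of_pos_of_nonneg (add_pos (hp i t ht) (hp j x hx)) hc0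
  have hP0pos : (0:ℝ) < ∑ k, p k x := by rw [hP0]; exact hD x hx
  -- rewriting the Bajraktarević mean near the diagonal point
  have hbaj : ∀ t s : ℝ,
      bajMean I f p (Function.update (Function.update (fun _ => x) i t) j s)
        = g ((p i t * f t + p j s * f s + c * f x) / (p i t + p j s + c)) := by
    intro t s
    have h1 := aux_sum i j hij (fun k y => p k y * f y) x t s
    have h2 := aux_sum i j hij p x t s
    unfold bajMean
    rw [h1, h2, ← Finset.sum_mul, ← hc]
  -- value of the inner ratio at the diagonal
  have hRxx : (p i x * f x + p j x * f x + c * f x) / (p i x + p j x + c) = f x := by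
    rw [show p i x * f x + p j x * f x + c * f x = (p i x + p j x + c) * f x by ring]
    exact mul_div_cancel_left₀ (f x) (hD x hx).ne'
  -- eventually, t is in I and the inner ratio is in V
  have hRcont : ContinuousAt
      (fun t => (p i t * f t + p j x * f x + c * f x) / (p i t + p j x + c)) x := by
    exact ContinuousAt.div
      ((((hpi x hx).continuousAt.mul (hf x hx).continuousAt).add
        continuousAt_const).add continuousAt_const)
      (((hpi x hx).continuousAt.add continuousAt_const).add continuousAt_const)
      (hD x hx).ne'
  have hWev : ∀ᶠ t in nhds x, t ∈ I ∧
      (p i t * f t + p j x * f x + c * f x) / (p i t + p j x + c) ∈ V := by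
    have h1 : ∀ᶠ t in nhds x, t ∈ I := by
      filter_upwards [hIopen.mem_nhds hx] with t ht using ht
    have h2 : ∀ᶠ t in nhds x,
        (p i t * f t + p j x * f x + c * f x) / (p i t + p j x + c) ∈ V := by
      apply hRcont.eventually_mem
      rw [hRxx]
      exact hVo.mem_nhds hfxV
    exact h1.and h2
  -- inner derivative
  have inner : ∀ t, t ∈ I →
      (p i t * f t + p j x * f x + c * f x) / (p i t + p j x + c) ∈ V →
      HasDerivAt
        (fun s => g ((p i t * f t + p j s * f s + c * f x) / (p i t + p j s + c)))
        ((f' (g ((p i t * f t + p j x * f x + c * f x) / (p i t + p j x + c))))⁻¹ *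
          (((p' j x * f x + p j x * f' x) * (p i t + p j x + c) -
            (p i t * f t + p j x * f x + c * f x) * p' j x) / (p i t + p j x + c) ^ 2))
        x := by
    intro t ht hV
    have hnum : HasDerivAt (fun s => p i t * f t + p j s * f s + c * f x)
        (p' j x * f x + p j x * f' x) x :=
      (((hpj x hx).mul (hf x hx)).const_add (p i t * f t)).add_const (c * f x)
    have hden : HasDerivAt (fun s => p i t + p j s + c) (p' j x) x :=
      ((hpj x hx).const_add (p i t)).add_const c
    have hRdiv := hnum.div hden (hD t ht).ne'
    have hgz := hVsub _ hV
    exact hgz.comp x hRdiv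
  -- the first partial derivative near the diagonal
  have E2 : ∀ᶠ t in nhds x,
      pder (bajMean I f p) j (Function.update (fun _ => x) i t) =
      (f' (g ((p i t * f t + p j x * f x + c * f x) / (p i t + p j x + c))))⁻¹ *
        (((p' j x * f x + p j x * f' x) * (p i t + p j x + c) -
          (p i t * f t + p j x * f x + c * f x) * p' j x) / (p i t + p j x + c) ^ 2) := by
    filter_upwards [hWev] with t htv
    obtain ⟨ht, hV⟩ := htv
    have hupd : Function.update (fun _ : Fin n => x) i t j = x :=
      Function.update_of_ne (Ne.symm hij) _ _
    unfold pder
    rw [hupd]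
    have hfun : (fun s => bajMean I f p
          (Function.update (Function.update (fun _ => x) i t) j s))
        = fun s => g ((p i t * f t + p j s * f s + c * f x) / (p i t + p j s + c)) :=
      funext fun s => hbaj t s
    rw [hfun]
    exact (inner t ht hV).deriv
  -- outer derivative ingredients
  have hNt : HasDerivAt (fun t => p i t * f t + p j x * f x + c * f x)
      (p' i x * f x + p i x * f' x) x :=
    (((hpi x hx).mul (hf x hx)).add_const (p j x * f x)).add_const (c * f x)
  have hDt : HasDerivAt (fun t => p i t + p j x + c) (p' i x) x :=
    ((hpi x hx).add_const (p j x)).add_const c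
  have hRt := hNt.div hDt (hD x hx).ne'
  have hgx : g (f x) = x := hinj.leftInvOn_invFunOn hx
  have hgfx : HasDerivAt g (f' x)⁻¹ (f x) := by
    have h := hVsub (f x) hfxV
    rwa [hgx] at h
  have hf'g : HasDerivAt (fun z => f' (g z)) (f'' x * (f' x)⁻¹) (f x) := by
    have h2 : HasDerivAt f' (f'' x) (g (f x)) := by rw [hgx]; exact hf' x hx
    exact h2.comp (f x) hgfx
  have hu : HasDerivAt (fun z => (f' (g z))⁻¹)
      (-(f'' x * (f' x)⁻¹) / (f' x) ^ 2) (f x) := by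
    have h := hf'g.inv (by rw [hgx]; exact hf'0 x hx)
    rwa [hgx] at h
  have hu' : HasDerivAt (fun z => (f' (g z))⁻¹)
      (-(f'' x * (f' x)⁻¹) / (f' x) ^ 2)
      ((p i x * f x + p j x * f x + c * f x) / (p i x + p j x + c)) := by
    rw [hRxx]; exact hu
  have hA := hu'.comp x hRt
  have hnum2 : HasDerivAt
      (fun t => (p' j x * f x + p j x * f' x) * (p i t + p j x + c) -
        (p i t * f t + p j x * f x + c * f x) * p' j x)
      ((p' j x * f x + p j x * f' x) * p' i x -
        (p' i x * f x + p i x * f' x) * p' j x) x :=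
    (hDt.const_mul (p' j x * f x + p j x * f' x)).sub (hNt.mul_const (p' j x))
  have hden2 := hDt.pow 2
  have hB := hnum2.div hden2 (pow_ne_zero 2 (hD x hx).ne')
  have hFt := hA.mul hB
  constructor
  · exact hFt.differentiableAt.congr_of_eventuallyEq E2
  · have hFt2 : HasDerivAt
        (fun t => pder (bajMean I f p) j (Function.update (fun _ => x) i t)) _ x :=
      hFt.congr_of_eventuallyEq E2
    show deriv (fun t => pder (bajMean I f p) j (Function.update (fun _ => x) i t)) x = _
    rw [hFt2.deriv]
    simp only [Function.comp_apply, Pi.div_apply, Pi.pow_apply]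
    rw [hRxx, hgx, hP0]
    have hF1 := hf'0 x hx
    have hDne := (hD x hx).ne'
    field_simp
    ring
end

section
/- Let n ≥ 2 and let M, N : I^n → I be n-variable means (i.e., min(x_1,…,x_n) ≤ M(x_1,…,x_n) ≤ max(x_1,…,x_n) for all x_1,…,x_n ∈ I, and similarly for N) such that M is locally smaller than N. If M and N are partially differentiable at every diagonal point of I^n, then (∂_i M)^Δ = (∂_i N)^Δ on I for every i ∈ {1,…,n}. If, in addition, M and N are twice differentiable at every diagonal point of I^n, then at every point of I the symmetric (n−1)×(n−1)-matrix with (i,j)-entry (∂_i∂_j N)^Δ − (∂_i∂_j M)^Δ, for i, j ∈ {1,…,n−1}, is positive semidefinite. -/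
open Set Function Real

open Filter Topology

-- L0 : update line has derivative single
lemma hasDerivAt_update' {n : ℕ} (a : Fin n → ℝ) (i : Fin n) (s : ℝ) :
    HasDerivAt (fun t => Function.update a i t) (Pi.single i (1:ℝ)) s := by
  have heq : (fun t => Function.update a i t)
      = fun t => a + (t - a i) • (Pi.single i 1 : Fin n → ℝ) := by
    funext t
    funext k
    rcases eq_or_ne k i with rfl | hk
    · simp [Function.update, Pi.single_apply]
    · simp [Function.update, Pi.single_apply, hk, Ne.symm hk]
  rw [heq]
  have h := (((hasDerivAt_id s).sub_const (a i)).smul_const ((Pi.single i 1 : Fin n → ℝ))).const_add a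
  simpa using h

-- L1 : pder via fderiv
lemma pder_eq_fderiv {n : ℕ} {Φ : (Fin n → ℝ) → ℝ} {z : Fin n → ℝ} (j : Fin n)
    (h : DifferentiableAt ℝ Φ z) :
    pder Φ j z = fderiv ℝ Φ z (Pi.single j 1) := by
  have h1 : HasFDerivAt Φ (fderiv ℝ Φ z) (Function.update z j (z j)) := by
    rw [Function.update_eq_self]; exact h.hasFDerivAt
  have h2 := h1.comp_hasDerivAt (z j) (hasDerivAt_update' z j (z j))
  exact h2.deriv

-- diag map derivative
lemma hasDerivAt_diag {n : ℕ} (x : ℝ) :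
    HasDerivAt (fun t => (fun _ : Fin n => t)) (fun _ : Fin n => (1:ℝ)) x := by
  have h := (hasDerivAt_id x).smul_const (fun _ : Fin n => (1:ℝ))
  have heq : (fun t : ℝ => (fun _ : Fin n => t)) = fun t => t • (fun _ : Fin n => (1:ℝ)) := by
    funext t k; simp
  rw [heq]; simpa using h

-- Lemma A : eventual differentiability near a diagonal point
lemma eventually_diffAt {n : ℕ} {Φ : (Fin n → ℝ) → ℝ} {x : ℝ}
    (hd : DifferentiableAt ℝ Φ (fun _ => x))
    (hd2 : DifferentiableAt ℝ (fderiv ℝ Φ) (fun _ => x))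
    (hdiag : ∀ᶠ t in 𝓝 x, Φ (fun _ => t) = t) :
    ∀ᶠ z in 𝓝 (fun _ : Fin n => x), DifferentiableAt ℝ Φ z := by
  have hcomp : HasDerivAt (fun t => Φ (fun _ : Fin n => t))
      (fderiv ℝ Φ (fun _ => x) (fun _ => 1)) x :=
    hd.hasFDerivAt.comp_hasDerivAt x (hasDerivAt_diag x)
  have hone : fderiv ℝ Φ (fun _ : Fin n => x) (fun _ => 1) = 1 := by
    have h1 : deriv (fun t => Φ (fun _ : Fin n => t)) x = deriv (fun t : ℝ => t) x := by
      apply Filter.EventuallyEq.deriv_eq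
      exact hdiag
    rw [← hcomp.deriv, h1]; simp
  have hne : fderiv ℝ Φ (fun _ : Fin n => x) ≠ 0 := by
    intro h
    rw [h] at hone
    simp at hone
  have hev := hd2.continuousAt.eventually_ne hne
  filter_upwards [hev] with z hz
  by_contra hcon
  exact hz (fderiv_zero_of_not_differentiableAt hcon)

-- Lemma B : pder2 via second fderiv
lemma pder2_eq {n : ℕ} {Φ : (Fin n → ℝ) → ℝ} {x : ℝ}
    (hdiff : ∀ᶠ z in 𝓝 (fun _ : Fin n => x), DifferentiableAt ℝ Φ z)
    (hd2 : DifferentiableAt ℝ (fderiv ℝ Φ) (fun _ => x)) (i j : Fin n) :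
    pder2 Φ i j (fun _ => x)
      = fderiv ℝ (fderiv ℝ Φ) (fun _ => x) (Pi.single i 1) (Pi.single j 1) := by
  set a : Fin n → ℝ := fun _ => x with ha
  have hupd : Tendsto (fun t => Function.update a i t) (𝓝 x) (𝓝 a) := by
    have := (hasDerivAt_update' a i x).continuousAt
    exact this.tendsto.mono_right (le_of_eq (congrArg nhds (Function.update_eq_self i a)))
  have hev : (fun t => pder Φ j (Function.update a i t))
      =ᶠ[𝓝 x] fun t => fderiv ℝ Φ (Function.update a i t) (Pi.single j 1) := by
    filter_upwards [hupd.eventually hdiff] with t ht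
    exact pder_eq_fderiv j ht
  have h1 : HasFDerivAt (fderiv ℝ Φ) (fderiv ℝ (fderiv ℝ Φ) a)
      (Function.update a i x) := by
    rw [show Function.update a i x = a by rw [ha]; exact Function.update_eq_self i a]
    exact hd2.hasFDerivAt
  have h2 : HasDerivAt (fun t => fderiv ℝ Φ (Function.update a i t))
      (fderiv ℝ (fderiv ℝ Φ) a (Pi.single i 1)) x :=
    h1.comp_hasDerivAt x (hasDerivAt_update' a i x)
  have h3 : HasDerivAt (fun t => fderiv ℝ Φ (Function.update a i t) (Pi.single j 1))
      (fderiv ℝ (fderiv ℝ Φ) a (Pi.single i 1) (Pi.single j 1)) x := by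
    have happ := ((ContinuousLinearMap.apply ℝ ℝ (Pi.single j 1 : Fin n → ℝ)).hasFDerivAt
      (x := fderiv ℝ Φ (Function.update a i x))).comp_hasDerivAt x h2
    exact happ
  have : pder2 Φ i j a = deriv (fun t => pder Φ j (Function.update a i t)) x := rfl
  rw [this, hev.deriv_eq, h3.deriv]

-- Lemma C : second derivative quadratic form nonneg at local min with vanishing gradient
lemma quad_nonneg {n : ℕ} (g : (Fin n → ℝ) → ℝ) (a w : Fin n → ℝ)
    (h0 : g a = 0) (hge : ∀ᶠ z in 𝓝 a, 0 ≤ g z)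
    (hdiff : ∀ᶠ z in 𝓝 a, DifferentiableAt ℝ g z)
    (hd2 : DifferentiableAt ℝ (fderiv ℝ g) a)
    (hgrad : fderiv ℝ g a w = 0) :
    0 ≤ fderiv ℝ (fderiv ℝ g) a w w := by
  by_contra hcon
  push_neg at hcon
  set Q : ℝ := fderiv ℝ (fderiv ℝ g) a w w with hQ
  set line : ℝ → (Fin n → ℝ) := fun t => a + t • w with hline
  have hline0 : line 0 = a := by simp [hline]
  have hlineD : ∀ s : ℝ, HasDerivAt line w s := by
    intro s
    have h := ((hasDerivAt_id s).smul_const w).const_add a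
    have h' : HasDerivAt (fun t => a + t • w) w s := by simpa using h
    exact h'
  have hlinet : Tendsto line (𝓝 0) (𝓝 a) := by
    have := (hlineD 0).continuousAt.tendsto
    rwa [hline0] at this
  set ψ : ℝ → ℝ := fun t => fderiv ℝ g (line t) w with hψ
  have hψ0 : ψ 0 = 0 := by rw [hψ]; simp only [hline0]; exact hgrad
  -- ψ has derivative Q at 0
  have hψd : HasDerivAt ψ Q 0 := by
    have h1 : HasFDerivAt (fderiv ℝ g) (fderiv ℝ (fderiv ℝ g) a) (line 0) := by
      rw [hline0]; exact hd2.hasFDerivAt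
    have h2 : HasDerivAt (fun t => fderiv ℝ g (line t))
        (fderiv ℝ (fderiv ℝ g) a w) 0 := h1.comp_hasDerivAt 0 (hlineD 0)
    have h3 := ((ContinuousLinearMap.apply ℝ ℝ w).hasFDerivAt
      (x := fderiv ℝ g (line 0))).comp_hasDerivAt 0 h2
    exact h3
  -- eventually ψ t < 0 for t > 0
  have hslope : Tendsto (slope ψ 0) (𝓝[≠] 0) (𝓝 Q) :=
    hasDerivAt_iff_tendsto_slope.mp hψd
  have hs1 : ∀ᶠ t in 𝓝[≠] (0:ℝ), slope ψ 0 t < 0 :=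
    hslope.eventually_lt_const hcon
  have hs2 : ∀ᶠ t in 𝓝[>] (0:ℝ), slope ψ 0 t < 0 :=
    nhdsWithin_mono 0 (fun t ht => ne_of_gt ht) hs1
  have hψneg : ∀ᶠ t in 𝓝[>] (0:ℝ), ψ t < 0 := by
    filter_upwards [hs2, self_mem_nhdsWithin] with t ht (ht0 : (0:ℝ) < t)
    have hsl : slope ψ 0 t = ψ t / t := by
      simp [slope, hψ0, div_eq_inv_mul]
    rw [hsl] at ht
    by_contra hc
    push_neg at hc
    have := div_nonneg hc ht0.le
    linarith
  -- eventually φ has derivative ψ and is nonneg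
  have hev : ∀ᶠ t in 𝓝 (0:ℝ), DifferentiableAt ℝ g (line t) ∧ 0 ≤ g (line t) :=
    hlinet.eventually (hdiff.and hge)
  set φ : ℝ → ℝ := fun t => g (line t) with hφ
  have hφd : ∀ t : ℝ, DifferentiableAt ℝ g (line t) → HasDerivAt φ (ψ t) t := by
    intro t ht
    exact ht.hasFDerivAt.comp_hasDerivAt t (hlineD t)
  have hall : ∀ᶠ t in 𝓝[>] (0:ℝ),
      (DifferentiableAt ℝ g (line t) ∧ 0 ≤ g (line t)) ∧ ψ t < 0 :=
    (hev.filter_mono nhdsWithin_le_nhds).and hψneg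
  obtain ⟨δ, hδpos, hδ⟩ := mem_nhdsGT_iff_exists_Ioc_subset.mp hall
  have hδ0 : (0:ℝ) < δ := hδpos
  -- φ is strictly decreasing on [0, δ]
  have hanti : StrictAntiOn φ (Icc 0 δ) := by
    apply strictAntiOn_of_deriv_neg (convex_Icc 0 δ)
    · intro t ht
      rcases eq_or_ne t 0 with rfl | ht0
      · have : ContinuousAt φ 0 := by
          have := (hdiff.self_of_nhds).continuousAt
          rw [← hline0] at this
          exact this.comp (hlineD 0).continuousAt
        exact this.continuousWithinAt
      · have htm : t ∈ Ioc 0 δ := ⟨lt_of_le_of_ne ht.1 (Ne.symm ht0), ht.2⟩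
        exact ((hφd t (hδ htm).1.1).continuousAt).continuousWithinAt
    · intro t ht
      rw [interior_Icc] at ht
      have htm : t ∈ Ioc 0 δ := ⟨ht.1, ht.2.le⟩
      rw [(hφd t (hδ htm).1.1).deriv]
      exact (hδ htm).2
  have h1 : φ δ < φ 0 := hanti (left_mem_Icc.mpr hδ0.le) (right_mem_Icc.mpr hδ0.le) hδ0
  have h2 : φ 0 = 0 := by rw [hφ]; simp only [hline0]; exact h0
  have h3 : 0 ≤ φ δ := (hδ (right_mem_Ioc.mpr hδ0)).1.2
  linarith


/-- Theorem PZ17, necessity part: if the means `M, N` on `Iⁿ` satisfy that `M` is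
locally smaller than `N` and are partially differentiable at every diagonal point,
then `(∂ᵢM)^Δ = (∂ᵢN)^Δ` for all `i`; if moreover `M` and `N` are twice differentiable
at every diagonal point, then the `(n-1)×(n-1)` matrix
`((∂ᵢ∂ⱼN)^Δ - (∂ᵢ∂ⱼM)^Δ)_{i,j=1}^{n-1}` is positive semidefinite at every point of `I`. -/
theorem stmt3 {n : ℕ} (hn : 2 ≤ n) (I : Set ℝ) (hIopen : IsOpen I)
    (hIconn : I.OrdConnected) (hIne : I.Nonempty)
    (M N : (Fin n → ℝ) → ℝ)
    (hM : ∀ x : Fin n → ℝ, (∀ i, x i ∈ I) → (⨅ i, x i) ≤ M x ∧ M x ≤ ⨆ i, x i)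
    (hN : ∀ x : Fin n → ℝ, (∀ i, x i ∈ I) → (⨅ i, x i) ≤ N x ∧ N x ≤ ⨆ i, x i)
    (hloc : LocallySmaller I M N)
    (hMd : ∀ x ∈ I, ∀ i : Fin n,
      DifferentiableAt ℝ (fun t => M (Function.update (fun _ => x) i t)) x)
    (hNd : ∀ x ∈ I, ∀ i : Fin n,
      DifferentiableAt ℝ (fun t => N (Function.update (fun _ => x) i t)) x) :
    (∀ x ∈ I, ∀ i : Fin n, pder M i (fun _ => x) = pder N i (fun _ => x)) ∧
    ((∀ x ∈ I, DifferentiableAt ℝ M (fun _ => x) ∧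
        DifferentiableAt ℝ (fderiv ℝ M) (fun _ => x)) →
     (∀ x ∈ I, DifferentiableAt ℝ N (fun _ => x) ∧
        DifferentiableAt ℝ (fderiv ℝ N) (fun _ => x)) →
     ∀ x ∈ I, ∀ v : Fin (n - 1) → ℝ,
       0 ≤ ∑ i : Fin (n - 1), ∑ j : Fin (n - 1), v i * v j *
          (pder2 N (Fin.castLE (Nat.sub_le n 1) i) (Fin.castLE (Nat.sub_le n 1) j)
              (fun _ => x) -
            pder2 M (Fin.castLE (Nat.sub_le n 1) i) (Fin.castLE (Nat.sub_le n 1) j)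
              (fun _ => x))) := by
  have hne : Nonempty (Fin n) := ⟨⟨0, by omega⟩⟩
  obtain ⟨U, hUopen, hUsub, hUdiag, hUle⟩ := hloc
  -- diagonal values
  have hdiagM : ∀ t ∈ I, M (fun _ => t) = t := by
    intro t ht
    have h := hM (fun _ => t) (fun _ => ht)
    rw [ciInf_const, ciSup_const] at h
    exact le_antisymm h.2 h.1
  have hdiagN : ∀ t ∈ I, N (fun _ => t) = t := by
    intro t ht
    have h := hN (fun _ => t) (fun _ => ht)
    rw [ciInf_const, ciSup_const] at h
    exact le_antisymm h.2 h.1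
  -- Part 1
  have part1 : ∀ x ∈ I, ∀ i : Fin n, pder M i (fun _ => x) = pder N i (fun _ => x) := by
    intro x hx i
    set a : Fin n → ℝ := fun _ => x with ha
    have haU : a ∈ U := hUdiag x hx
    have hupd : Tendsto (fun t => Function.update a i t) (𝓝 x) (𝓝 a) := by
      have := (hasDerivAt_update' a i x).continuousAt.tendsto
      rwa [Function.update_eq_self] at this
    set h : ℝ → ℝ := fun t => N (Function.update a i t) - M (Function.update a i t) with hh
    have hloc_min : IsLocalMin h x := by
      have hevU : ∀ᶠ t in 𝓝 x, Function.update a i t ∈ U :=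
        hupd.eventually (hUopen.mem_nhds haU)
      filter_upwards [hevU] with t ht
      have h1 : h x = 0 := by
        simp only [hh, Function.update_eq_self, ha]
        rw [hdiagM x hx, hdiagN x hx]; ring
      rw [h1, hh]
      simp only [sub_nonneg]
      exact hUle _ ht
    have hder := hloc_min.deriv_eq_zero
    have hsub : deriv h x = deriv (fun t => N (Function.update a i t)) x
        - deriv (fun t => M (Function.update a i t)) x :=
      deriv_sub (hNd x hx i) (hMd x hx i)
    have : pder M i a = deriv (fun t => M (Function.update a i t)) x := rfl
    have h2 : pder N i a = deriv (fun t => N (Function.update a i t)) x := rfl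
    rw [this, h2]
    linarith [hder, hsub]
  refine ⟨part1, ?_⟩
  -- Part 2
  intro hMd2 hNd2 x hx v
  set a : Fin n → ℝ := fun _ => x with ha
  have haU : a ∈ U := hUdiag x hx
  obtain ⟨hMdx, hMdd⟩ := hMd2 x hx
  obtain ⟨hNdx, hNdd⟩ := hNd2 x hx
  have hdiagM' : ∀ᶠ t in 𝓝 x, M (fun _ => t) = t :=
    eventually_of_mem (hIopen.mem_nhds hx) hdiagM
  have hdiagN' : ∀ᶠ t in 𝓝 x, N (fun _ => t) = t :=
    eventually_of_mem (hIopen.mem_nhds hx) hdiagN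
  have hMev := eventually_diffAt hMdx hMdd hdiagM'
  have hNev := eventually_diffAt hNdx hNdd hdiagN'
  set g : (Fin n → ℝ) → ℝ := fun z => N z - M z with hg
  have hgev : ∀ᶠ z in 𝓝 a, DifferentiableAt ℝ g z := by
    filter_upwards [hNev, hMev] with z h1 h2; exact h1.sub h2
  have hfg : fderiv ℝ g =ᶠ[𝓝 a] fun z => fderiv ℝ N z - fderiv ℝ M z := by
    filter_upwards [hNev, hMev] with z h1 h2
    exact fderiv_sub h1 h2
  have hsubd : DifferentiableAt ℝ (fun z => fderiv ℝ N z - fderiv ℝ M z) a :=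
    hNdd.sub hMdd
  have hgd2 : DifferentiableAt ℝ (fderiv ℝ g) a :=
    (hfg.differentiableAt_iff).mpr hsubd
  have hH : fderiv ℝ (fderiv ℝ g) a
      = fderiv ℝ (fderiv ℝ N) a - fderiv ℝ (fderiv ℝ M) a := by
    rw [hfg.fderiv_eq]
    exact fderiv_sub hNdd hMdd
  -- the key identity for entries
  have key : ∀ i j : Fin n, pder2 N i j a - pder2 M i j a
      = fderiv ℝ (fderiv ℝ g) a (Pi.single i 1) (Pi.single j 1) := by
    intro i j
    rw [pder2_eq hNev hNdd i j, pder2_eq hMev hMdd i j, hH]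
    simp [ContinuousLinearMap.sub_apply]
    rfl
  -- gradient of g vanishes on the diagonal
  have hgrad0 : ∀ i : Fin n, fderiv ℝ g a (Pi.single i 1) = 0 := by
    intro i
    have h1 : fderiv ℝ g a = fderiv ℝ N a - fderiv ℝ M a := hfg.self_of_nhds
    rw [h1, ContinuousLinearMap.sub_apply,
      ← pder_eq_fderiv i hNdx, ← pder_eq_fderiv i hMdx, ← part1 x hx i, sub_self]
  set w : Fin n → ℝ :=
    ∑ i : Fin (n-1), v i • (Pi.single (Fin.castLE (Nat.sub_le n 1) i) 1 : Fin n → ℝ)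
    with hw
  have hgradw : fderiv ℝ g a w = 0 := by
    rw [hw, map_sum]
    apply Finset.sum_eq_zero
    intro i _
    rw [map_smul, hgrad0, smul_zero]
  have h0 : g a = 0 := by
    simp only [hg, ha]
    rw [hdiagN x hx, hdiagM x hx, sub_self]
  have hge : ∀ᶠ z in 𝓝 a, 0 ≤ g z := by
    filter_upwards [hUopen.mem_nhds haU] with z hz
    exact sub_nonneg.mpr (hUle z hz)
  have main : 0 ≤ fderiv ℝ (fderiv ℝ g) a w w := quad_nonneg g a w h0 hge hgev hgd2 hgradw
  have expand : fderiv ℝ (fderiv ℝ g) a w w = ∑ i : Fin (n-1), ∑ j : Fin (n-1), v i * v j *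
      (fderiv ℝ (fderiv ℝ g) a (Pi.single (Fin.castLE (Nat.sub_le n 1) i) 1)
         (Pi.single (Fin.castLE (Nat.sub_le n 1) j) 1)) := by
    rw [hw]
    simp only [map_sum, map_smul, ContinuousLinearMap.sum_apply,
      ContinuousLinearMap.smul_apply, ContinuousLinearMap.coe_sum', Finset.sum_apply,
      smul_eq_mul, Finset.mul_sum]
    rw [Finset.sum_comm]
    refine Finset.sum_congr rfl fun i _ => Finset.sum_congr rfl fun j _ => by ring
  have final : ∑ i : Fin (n-1), ∑ j : Fin (n-1), v i * v j *
      (pder2 N (Fin.castLE (Nat.sub_le n 1) i) (Fin.castLE (Nat.sub_le n 1) j) a -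
        pder2 M (Fin.castLE (Nat.sub_le n 1) i) (Fin.castLE (Nat.sub_le n 1) j) a)
      = fderiv ℝ (fderiv ℝ g) a w w := by
    rw [expand]
    apply Finset.sum_congr rfl
    intro i _
    apply Finset.sum_congr rfl
    intro j _
    rw [key]
  rw [ha] at final
  rw [final]
  exact main
end

section
/- Let n ≥ 2, let f, g : I → ℝ be differentiable functions with nowhere vanishing first derivatives, and let p, q : I → ℝ_+^n be continuous. If A_{f,p} is locally smaller than A_{g,q}, then p_i/p_0 = q_i/q_0 on I for every i ∈ {1,…,n}. -/
open Set Function Real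

open Filter Topology

section Aux

variable {I : Set ℝ} {f f' : ℝ → ℝ}

lemma my_hasDerivAt_mul {u v : ℝ → ℝ} {x v' : ℝ} (hu : ContinuousAt u x)
    (hv : HasDerivAt v v' x) (hvx : v x = 0) :
    HasDerivAt (fun t => u t * v t) (u x * v') x := by
  rw [hasDerivAt_iff_tendsto_slope] at hv ⊢
  have h2 : Tendsto (fun t => u t * slope v x t) (𝓝[≠] x) (𝓝 (u x * v')) :=
    (hu.continuousWithinAt.tendsto).mul hv
  apply h2.congr'
  filter_upwards [self_mem_nhdsWithin] with t ht
  simp only [slope_def_field, hvx, mul_zero, sub_zero]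
  ring

lemma my_sign (hIconv : Convex ℝ I) (hf : ∀ x ∈ I, HasDerivAt f (f' x) x)
    (hf'0 : ∀ x ∈ I, f' x ≠ 0) :
    (∀ x ∈ I, 0 < f' x) ∨ (∀ x ∈ I, f' x < 0) :=
  (hasDerivWithinAt_forall_lt_or_forall_gt_of_forall_ne hIconv
    (fun x hx => (hf x hx).hasDerivWithinAt) hf'0).symm

lemma my_mono_or_anti (hIopen : IsOpen I) (hIconv : Convex ℝ I)
    (hf : ∀ x ∈ I, HasDerivAt f (f' x) x) (hf'0 : ∀ x ∈ I, f' x ≠ 0) :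
    StrictMonoOn f I ∨ StrictAntiOn f I := by
  have hcont : ContinuousOn f I := fun x hx => (hf x hx).continuousAt.continuousWithinAt
  rcases my_sign hIconv hf hf'0 with h | h
  · left
    exact strictMonoOn_of_deriv_pos hIconv hcont fun x hx => by
      rw [hIopen.interior_eq] at hx; rw [(hf x hx).deriv]; exact h x hx
  · right
    exact strictAntiOn_of_deriv_neg hIconv hcont fun x hx => by
      rw [hIopen.interior_eq] at hx; rw [(hf x hx).deriv]; exact h x hx

lemma my_injOn (hIopen : IsOpen I) (hIconv : Convex ℝ I)
    (hf : ∀ x ∈ I, HasDerivAt f (f' x) x) (hf'0 : ∀ x ∈ I, f' x ≠ 0) :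
    InjOn f I :=
  (my_mono_or_anti hIopen hIconv hf hf'0).elim StrictMonoOn.injOn StrictAntiOn.injOn

lemma my_image_open (hIopen : IsOpen I) (hIconv : Convex ℝ I)
    (hf : ∀ x ∈ I, HasDerivAt f (f' x) x) (hf'0 : ∀ x ∈ I, f' x ≠ 0) :
    IsOpen (f '' I) := by
  have hcont : ContinuousOn f I := fun x hx => (hf x hx).continuousAt.continuousWithinAt
  have hconn : OrdConnected (f '' I) :=
    isPreconnected_iff_ordConnected.1 ((hIconv.isPreconnected).image f hcont)
  rw [isOpen_iff_mem_nhds]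
  rintro y ⟨x, hx, rfl⟩
  obtain ⟨ε, hε, hball⟩ := Metric.isOpen_iff.1 hIopen x hx
  rw [Real.ball_eq_Ioo] at hball
  have haI : x - ε / 2 ∈ I := hball ⟨by linarith, by linarith⟩
  have hbI : x + ε / 2 ∈ I := hball ⟨by linarith, by linarith⟩
  have ha' : f (x - ε / 2) ∈ f '' I := mem_image_of_mem f haI
  have hb' : f (x + ε / 2) ∈ f '' I := mem_image_of_mem f hbI
  rcases my_mono_or_anti hIopen hIconv hf hf'0 with hm | hm
  · refine mem_nhds_iff.2 ⟨Ioo (f (x - ε / 2)) (f (x + ε / 2)),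
      Ioo_subset_Icc_self.trans (hconn.out ha' hb'), isOpen_Ioo, ?_, ?_⟩
    · exact hm haI hx (by linarith)
    · exact hm hx hbI (by linarith)
  · refine mem_nhds_iff.2 ⟨Ioo (f (x + ε / 2)) (f (x - ε / 2)),
      Ioo_subset_Icc_self.trans (hconn.out hb' ha'), isOpen_Ioo, ?_, ?_⟩
    · exact hm hx hbI (by linarith)
    · exact hm haI hx (by linarith)

lemma my_inv_deriv_mono (hIopen : IsOpen I) (hIconv : Convex ℝ I)
    (hf : ∀ x ∈ I, HasDerivAt f (f' x) x) (hf'0 : ∀ x ∈ I, f' x ≠ 0)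
    (hmono : StrictMonoOn f I) {x : ℝ} (hx : x ∈ I) :
    HasDerivAt (invFunOn f I) (f' x)⁻¹ (f x) := by
  have himg := my_image_open hIopen hIconv hf hf'0
  have hgx : invFunOn f I (f x) = x := hmono.injOn.leftInvOn_invFunOn hx
  have hmemn : f '' I ∈ 𝓝 (f x) := himg.mem_nhds (mem_image_of_mem f hx)
  have hinv : ∀ y ∈ f '' I, invFunOn f I y ∈ I ∧ f (invFunOn f I y) = y := by
    rintro y ⟨z, hz, rfl⟩
    exact Function.invFunOn_pos ⟨z, hz, rfl⟩
  have hmonoInv : MonotoneOn (invFunOn f I) (f '' I) := by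
    intro y1 h1 y2 h2 h12
    by_contra hlt
    push_neg at hlt
    have := hmono ((hinv y2 h2).1) ((hinv y1 h1).1) hlt
    rw [(hinv y1 h1).2, (hinv y2 h2).2] at this
    exact absurd h12 (not_le.2 this)
  have himgimg : invFunOn f I '' (f '' I) = I := by
    apply Subset.antisymm
    · rintro z ⟨y, hy, rfl⟩; exact (hinv y hy).1
    · intro z hz
      exact ⟨f z, mem_image_of_mem f hz, hmono.injOn.leftInvOn_invFunOn hz⟩
  have hcont : ContinuousAt (invFunOn f I) (f x) :=
    continuousAt_of_monotoneOn_of_image_mem_nhds hmonoInv hmemn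
      (by rw [himgimg, hgx]; exact hIopen.mem_nhds hx)
  exact HasDerivAt.of_local_left_inverse hcont (by rw [hgx]; exact hf x hx) (hf'0 x hx)
    (by filter_upwards [hmemn] with y hy using (hinv y hy).2)

lemma my_inv_deriv (hIopen : IsOpen I) (hIconv : Convex ℝ I)
    (hf : ∀ x ∈ I, HasDerivAt f (f' x) x) (hf'0 : ∀ x ∈ I, f' x ≠ 0)
    {x : ℝ} (hx : x ∈ I) :
    HasDerivAt (invFunOn f I) (f' x)⁻¹ (f x) := by
  rcases my_mono_or_anti hIopen hIconv hf hf'0 with hm | hm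
  · exact my_inv_deriv_mono hIopen hIconv hf hf'0 hm hx
  · set F : ℝ → ℝ := fun t => -f t with hF
    have hFd : ∀ t ∈ I, HasDerivAt F (-f' t) t := fun t ht => (hf t ht).neg
    have hFd0 : ∀ t ∈ I, -f' t ≠ 0 := fun t ht => neg_ne_zero.2 (hf'0 t ht)
    have hFmono : StrictMonoOn F I := fun a ha b hb hab => neg_lt_neg (hm ha hb hab)
    have h1 : HasDerivAt (invFunOn F I) (-f' x)⁻¹ (F x) :=
      my_inv_deriv_mono hIopen hIconv hFd hFd0 hFmono hx
    have hneg : HasDerivAt (fun y : ℝ => -y) (-1) (f x) := (hasDerivAt_id (f x)).neg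
    have h2 : HasDerivAt (fun y => invFunOn F I (-y)) ((-f' x)⁻¹ * (-1)) (f x) :=
      h1.comp (f x) hneg
    have himg := my_image_open hIopen hIconv hf hf'0
    have heq : invFunOn f I =ᶠ[𝓝 (f x)] fun y => invFunOn F I (-y) := by
      filter_upwards [himg.mem_nhds (mem_image_of_mem f hx)] with y hy
      obtain ⟨z, hz, rfl⟩ := hy
      have h3 : invFunOn f I (f z) = z := (my_injOn hIopen hIconv hf hf'0).leftInvOn_invFunOn hz
      have h4 : invFunOn F I (F z) = z := hFmono.injOn.leftInvOn_invFunOn hz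
      show invFunOn f I (f z) = invFunOn F I (-(f z))
      rw [h3, show -(f z) = F z from rfl, h4]
    have h5 := h2.congr_of_eventuallyEq heq
    have : (-f' x)⁻¹ * (-1) = (f' x)⁻¹ := by
      rw [inv_neg]; ring
    rwa [this] at h5

end Aux

lemma my_diag {n : ℕ} (I : Set ℝ) (f : ℝ → ℝ) (p : Fin n → ℝ → ℝ) {x : ℝ}
    (hx : x ∈ I) (hsum : (∑ j, p j x) ≠ 0) (hinj : Set.InjOn f I) :
    bajMean I f p (fun _ => x) = x := by
  have h1 : (∑ i, p i x * f x) / (∑ i, p i x) = f x := by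
    rw [← Finset.sum_mul, mul_div_cancel_left₀ _ hsum]
  simp only [bajMean]
  rw [h1]
  exact hinj.leftInvOn_invFunOn hx

lemma my_line {n : ℕ} (hn : 2 ≤ n) (I : Set ℝ) (hIopen : IsOpen I) (hIconv : Convex ℝ I)
    (f f' : ℝ → ℝ) (p : Fin n → ℝ → ℝ)
    (hf : ∀ x ∈ I, HasDerivAt f (f' x) x) (hf'0 : ∀ x ∈ I, f' x ≠ 0)
    (hp : ∀ i, ∀ x ∈ I, 0 < p i x) (hpc : ∀ i, ContinuousOn (p i) I)
    (i : Fin n) {x : ℝ} (hx : x ∈ I) :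
    HasDerivAt (fun t => bajMean I f p (Function.update (fun _ => x) i t))
      (p i x / ∑ j, p j x) x := by
  classical
  set P : ℝ := ∑ j ∈ ({i}ᶜ : Finset (Fin n)), p j x with hP
  have hPpos : 0 < P := by
    apply Finset.sum_pos (fun j _ => hp j x hx)
    haveI : Nontrivial (Fin n) := Fin.nontrivial_iff_two_le.mpr hn
    obtain ⟨j, hj⟩ := exists_ne i
    exact ⟨j, Finset.mem_compl.2 (by simp [hj])⟩
  have hsum : (∑ j, p j x) = p i x + P := Fintype.sum_eq_add_sum_compl i fun j => p j x
  have hpix := hp i x hx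
  have hden : p i x + P ≠ 0 := ne_of_gt (by linarith)
  set S : ℝ → ℝ := fun t => f x + (p i t / (p i t + P)) * (f t - f x) with hS
  have hu : ContinuousAt (fun t => p i t / (p i t + P)) x := by
    have h1 : ContinuousAt (p i) x := (hpc i).continuousAt (hIopen.mem_nhds hx)
    exact h1.div (h1.add continuousAt_const) hden
  have hv : HasDerivAt (fun t => f t - f x) (f' x) x := (hf x hx).sub_const (f x)
  have hSd : HasDerivAt S (p i x / (p i x + P) * f' x) x :=
    (my_hasDerivAt_mul hu hv (by simp)).const_add (f x)
  have hSx : S x = f x := by simp [hS]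
  have hinvd : HasDerivAt (invFunOn f I) (f' x)⁻¹ (S x) := by
    rw [hSx]; exact my_inv_deriv hIopen hIconv hf hf'0 hx
  have hcomp : HasDerivAt (fun t => invFunOn f I (S t))
      ((f' x)⁻¹ * (p i x / (p i x + P) * f' x)) x := hinvd.comp x hSd
  have heq : (fun t => bajMean I f p (Function.update (fun _ => x) i t)) =ᶠ[𝓝 x]
      (fun t => invFunOn f I (S t)) := by
    filter_upwards [hIopen.mem_nhds hx] with t ht
    have hnum : (∑ j, p j (Function.update (fun _ => x) i t j)
        * f (Function.update (fun _ => x) i t j)) = p i t * f t + P * f x := by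
      rw [Fintype.sum_eq_add_sum_compl i]
      simp only [Function.update_self]
      congr 1
      rw [hP, Finset.sum_mul]
      refine Finset.sum_congr rfl fun j hj => ?_
      have hji : j ≠ i := by simpa using hj
      rw [Function.update_of_ne hji]
    have hdeno : (∑ j, p j (Function.update (fun _ => x) i t j)) = p i t + P := by
      rw [Fintype.sum_eq_add_sum_compl i]
      simp only [Function.update_self]
      congr 1
      refine Finset.sum_congr rfl fun j hj => ?_
      have hji : j ≠ i := by simpa using hj
      rw [Function.update_of_ne hji]
    have hdent : p i t + P ≠ 0 := ne_of_gt (by have := hp i t ht; linarith)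
    simp only [bajMean]
    rw [hnum, hdeno]
    congr 1
    simp only [hS]
    field_simp
    ring
  have hval : (f' x)⁻¹ * (p i x / (p i x + P) * f' x) = p i x / ∑ j, p j x := by
    rw [hsum]
    field_simp [hf'0 x hx]
  rw [← hval]
  exact hcomp.congr_of_eventuallyEq heq

/-- Theorem 1NC, first-order necessary condition: if `f, g` are differentiable with
nonvanishing first derivatives, `p, q : I → ℝ₊ⁿ` are continuous and `A_{f,p}` is
locally smaller than `A_{g,q}`, then `pᵢ/p₀ = qᵢ/q₀` on `I` for all `i`. -/
theorem stmt5 {n : ℕ} (hn : 2 ≤ n) (I : Set ℝ) (hIopen : IsOpen I)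
    (hIconn : I.OrdConnected) (hIne : I.Nonempty)
    (f f' g g' : ℝ → ℝ) (p q : Fin n → ℝ → ℝ)
    (hf : ∀ x ∈ I, HasDerivAt f (f' x) x) (hf'0 : ∀ x ∈ I, f' x ≠ 0)
    (hg : ∀ x ∈ I, HasDerivAt g (g' x) x) (hg'0 : ∀ x ∈ I, g' x ≠ 0)
    (hp : ∀ i, ∀ x ∈ I, 0 < p i x) (hq : ∀ i, ∀ x ∈ I, 0 < q i x)
    (hpc : ∀ i, ContinuousOn (p i) I) (hqc : ∀ i, ContinuousOn (q i) I)
    (hloc : LocallySmaller I (bajMean I f p) (bajMean I g q)) :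
    ∀ i : Fin n, ∀ x ∈ I, p i x / (∑ j, p j x) = q i x / (∑ j, q j x) := by
  intro i x hx
  have hIconv : Convex ℝ I := hIconn.convex
  haveI : Nonempty (Fin n) := ⟨⟨0, by omega⟩⟩
  obtain ⟨U, hUopen, hUsub, hUdiag, hUle⟩ := hloc
  have hMd := my_line hn I hIopen hIconv f f' p hf hf'0 hp hpc i hx
  have hNd := my_line hn I hIopen hIconv g g' q hg hg'0 hq hqc i hx
  have hD : HasDerivAt
      (fun t => bajMean I g q (Function.update (fun _ => x) i t)
        - bajMean I f p (Function.update (fun _ => x) i t))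
      (q i x / ∑ j, q j x - p i x / ∑ j, p j x) x := hNd.sub hMd
  have hPsum : (∑ j, p j x) ≠ 0 :=
    ne_of_gt (Finset.sum_pos (fun j _ => hp j x hx) Finset.univ_nonempty)
  have hQsum : (∑ j, q j x) ≠ 0 :=
    ne_of_gt (Finset.sum_pos (fun j _ => hq j x hx) Finset.univ_nonempty)
  have hMdiag : bajMean I f p (fun _ => x) = x :=
    my_diag I f p hx hPsum (my_injOn hIopen hIconv hf hf'0)
  have hNdiag : bajMean I g q (fun _ => x) = x :=
    my_diag I g q hx hQsum (my_injOn hIopen hIconv hg hg'0)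
  have hupdx : Function.update (fun _ : Fin n => x) i x = fun _ => x := by
    ext j; simp [Function.update_apply]
  have hmin : IsLocalMin
      (fun t => bajMean I g q (Function.update (fun _ => x) i t)
        - bajMean I f p (Function.update (fun _ => x) i t)) x := by
    have hcontu : Continuous (fun t : ℝ => Function.update (fun _ : Fin n => x) i t) :=
      continuous_const.update i continuous_id
    have hU : (fun t : ℝ => Function.update (fun _ : Fin n => x) i t) ⁻¹' U ∈ 𝓝 x := by
      apply (hUopen.preimage hcontu).mem_nhds
      simp only [Set.mem_preimage, hupdx]
      exact hUdiag x hx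
    have hx0 : bajMean I g q (Function.update (fun _ : Fin n => x) i x)
        - bajMean I f p (Function.update (fun _ : Fin n => x) i x) = 0 := by
      rw [hupdx, hNdiag, hMdiag, sub_self]
    refine Filter.eventually_of_mem hU fun t ht => ?_
    simp only [hx0]
    exact sub_nonneg.2 (hUle _ ht)
  have h0 := hmin.hasDerivAt_eq_zero hD
  exact (sub_eq_zero.mp h0).symm
end

section
/- Let n ≥ 2, let f, g : I → ℝ be twice differentiable functions with nowhere vanishing first derivatives, and let p, q : I → ℝ_+^n be continuously differentiable. If A_{f,p} is locally smaller than A_{g,q}, then the function x ↦ q_0(x)²|g'(x)| / (p_0(x)²|f'(x)|) is increasing on I. -/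
open Set Function Real Filter Topology

/-- product with a vanishing differentiable factor -/
lemma hasDerivAt_mul_vanish {u v : ℝ → ℝ} {x v' : ℝ} (hu : ContinuousAt u x)
    (hv : HasDerivAt v v' x) (hv0 : v x = 0) :
    HasDerivAt (fun y => u y * v y) (u x * v') x := by
  rw [hasDerivAt_iff_tendsto_slope]
  have hv' : Tendsto (slope v x) (𝓝[≠] x) (𝓝 v') := hasDerivAt_iff_tendsto_slope.1 hv
  have hu' : Tendsto u (𝓝[≠] x) (𝓝 (u x)) := hu.continuousWithinAt.tendsto
  have := hu'.mul hv'
  refine this.congr' ?_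
  filter_upwards [self_mem_nhdsWithin] with y hy
  have hyx : y - x ≠ 0 := sub_ne_zero.2 hy
  simp [slope_def_field, hv0]
  ring

/-- Second-order test at an interior local minimum. -/
lemma second_deriv_test {D D' : ℝ → ℝ} {x c : ℝ}
    (hD : ∀ᶠ y in 𝓝 x, HasDerivAt D (D' y) y)
    (hD' : HasDerivAt D' c x)
    (hmin : ∀ᶠ y in 𝓝 x, D x ≤ D y) :
    D' x = 0 ∧ 0 ≤ c := by
  have hDx : HasDerivAt D (D' x) x := hD.self_of_nhds
  have h0 : D' x = 0 := (IsLocalMin.hasDerivAt_eq_zero hmin hDx)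
  refine ⟨h0, ?_⟩
  by_contra hc
  push_neg at hc
  -- D' is eventually negative to the right of x
  have hslope : Tendsto (slope D' x) (𝓝[≠] x) (𝓝 c) := hasDerivAt_iff_tendsto_slope.1 hD'
  have hneg : ∀ᶠ y in 𝓝[>] x, D' y < 0 := by
    have h1 : ∀ᶠ y in 𝓝[>] x, slope D' x y < 0 :=
      (hslope.mono_left (nhdsWithin_mono x fun y hy => ne_of_gt hy)).eventually
        (gt_mem_nhds hc)
    filter_upwards [h1, self_mem_nhdsWithin] with y hy hxy
    have : slope D' x y = D' y / (y - x) := by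
      rw [slope_def_field, h0, sub_zero]
    rw [this] at hy
    have h2 : 0 < y - x := sub_pos.2 hxy
    by_contra h3
    push_neg at h3
    exact absurd (div_nonneg h3 h2.le) (not_le.2 hy)
  -- pick δ
  obtain ⟨ε1, hε1, hball1⟩ := Metric.eventually_nhds_iff_ball.1 hD
  obtain ⟨ε2, hε2, hball2⟩ := Metric.eventually_nhds_iff_ball.1 hmin
  obtain ⟨ε3, hε3, hball3⟩ := Metric.mem_nhdsWithin_iff.1 hneg
  set δ := min ε1 (min ε2 ε3) / 2 with hδdef
  have hδ : 0 < δ := by positivity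
  have hδ1 : δ < ε1 := by
    have : min ε1 (min ε2 ε3) ≤ ε1 := min_le_left _ _
    nlinarith
  have hδ2 : δ < ε2 := by
    have : min ε1 (min ε2 ε3) ≤ ε2 := (min_le_right _ _).trans (min_le_left _ _)
    nlinarith
  have hδ3 : δ < ε3 := by
    have : min ε1 (min ε2 ε3) ≤ ε3 := (min_le_right _ _).trans (min_le_right _ _)
    nlinarith
  have hanti : StrictAntiOn D (Icc x (x + δ)) := by
    apply strictAntiOn_of_deriv_neg (convex_Icc _ _)
    · intro y hy
      have : dist y x < ε1 := by
        simp only [Real.dist_eq, abs_lt] at *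
        constructor <;> [linarith [hy.1]; linarith [hy.2]]
      exact (hball1 y this).continuousAt.continuousWithinAt
    · intro y hy
      rw [interior_Icc] at hy
      have hd : dist y x < ε1 := by
        simp only [Real.dist_eq, abs_lt]
        constructor <;> [linarith [hy.1]; linarith [hy.2]]
      have hd3 : dist y x < ε3 := by
        simp only [Real.dist_eq, abs_lt]
        constructor <;> [linarith [hy.1]; linarith [hy.2]]
      rw [(hball1 y hd).deriv]
      exact hball3 ⟨Metric.mem_ball.2 hd3, hy.1⟩
  have hlt : D (x + δ) < D x :=
    hanti (by simp [hδ.le]) (by simp [hδ.le]) (by linarith)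
  have hge : D x ≤ D (x + δ) := by
    apply hball2
    simp [Real.dist_eq, abs_of_pos hδ, hδ2]
  linarith

section Inverse

variable {I : Set ℝ} {f f' : ℝ → ℝ}

lemma injOn_of_deriv_ne_zero (hIconn : I.OrdConnected)
    (hf : ∀ x ∈ I, HasDerivAt f (f' x) x) (hf'0 : ∀ x ∈ I, f' x ≠ 0) :
    InjOn f I := by
  intro a ha b hb hab
  by_contra hne
  wlog hlt : a < b generalizing a b
  · exact this hb ha hab.symm (Ne.symm hne) (lt_of_le_of_ne (not_lt.1 hlt) (Ne.symm hne))
  have hIcc : Icc a b ⊆ I := hIconn.out ha hb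
  obtain ⟨c, hc, hc0⟩ := exists_hasDerivAt_eq_zero hlt
    (fun y hy => (hf y (hIcc hy)).continuousAt.continuousWithinAt) hab
    (fun y hy => hf y (hIcc (Ioo_subset_Icc_self hy)))
  exact hf'0 c (hIcc (Ioo_subset_Icc_self hc)) hc0

/-- A local frame around `x ∈ I`: points `a < x < b` within distance `ε`,
with `f x` strictly between `f a` and `f b` and all intermediate values attained on `[a,b]`. -/
lemma localFrame (hIopen : IsOpen I) (hIconn : I.OrdConnected)
    (hcont : ContinuousOn f I) (hinj : InjOn f I) {x : ℝ} (hx : x ∈ I)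
    {ε : ℝ} (hε : 0 < ε) :
    ∃ a b : ℝ, a ∈ I ∧ b ∈ I ∧ a < x ∧ x < b ∧ x - a < ε ∧ b - x < ε ∧ Icc a b ⊆ I ∧
      f x ∈ Ioo (min (f a) (f b)) (max (f a) (f b)) ∧
      ∀ y ∈ Ioo (min (f a) (f b)) (max (f a) (f b)), ∃ z ∈ Icc a b, f z = y := by
  obtain ⟨δ, hδ, hball⟩ := Metric.isOpen_iff.1 hIopen x hx
  set d := min δ ε / 2 with hd
  have hd0 : 0 < d := by positivity
  have hdδ : d < δ := by have := min_le_left δ ε; nlinarith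
  have hdε : d < ε := by have := min_le_right δ ε; nlinarith
  have hIccI : Icc (x - d) (x + d) ⊆ I := by
    intro z hz
    rw [mem_Icc] at hz
    apply hball
    rw [Metric.mem_ball, Real.dist_eq, abs_lt]
    constructor <;> linarith [hz.1, hz.2]
  refine ⟨x - d, x + d, ?_, ?_, by linarith, by linarith, by linarith, by linarith, hIccI, ?_, ?_⟩
  · exact hIccI (by constructor <;> linarith)
  · exact hIccI (by constructor <;> linarith)
  · have hMA := ContinuousOn.strictMonoOn_of_injOn_Icc' (by linarith : x - d ≤ x + d)
      (hcont.mono hIccI) (hinj.mono hIccI)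
    have hxm : x ∈ Icc (x - d) (x + d) := by constructor <;> linarith
    have ham : x - d ∈ Icc (x - d) (x + d) := by constructor <;> linarith
    have hbm : x + d ∈ Icc (x - d) (x + d) := by constructor <;> linarith
    rcases hMA with hM | hA
    · have h1 : f (x - d) < f x := hM ham hxm (by linarith)
      have h2 : f x < f (x + d) := hM hxm hbm (by linarith)
      constructor
      · exact lt_of_le_of_lt (min_le_left _ _) h1
      · exact lt_of_lt_of_le h2 (le_max_right _ _)
    · have h1 : f x < f (x - d) := hA ham hxm (by linarith)
      have h2 : f (x + d) < f x := hA hxm hbm (by linarith)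
      constructor
      · exact lt_of_le_of_lt (min_le_right _ _) h2
      · exact lt_of_lt_of_le h1 (le_max_left _ _)
  · intro y hy
    have hIVT := intermediate_value_uIcc
      (hcont.mono (subset_trans (by rw [uIcc_of_le (by linarith : x - d ≤ x + d)]) hIccI))
    have hyIcc : y ∈ uIcc (f (x - d)) (f (x + d)) := by
      rw [mem_uIcc]
      rcases le_total (f (x - d)) (f (x + d)) with h | h
      · left
        rw [min_eq_left h, max_eq_right h] at hy
        exact ⟨hy.1.le, hy.2.le⟩
      · right
        rw [min_eq_right h, max_eq_left h] at hy
        exact ⟨hy.1.le, hy.2.le⟩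
    obtain ⟨z, hz, hfz⟩ := hIVT hyIcc
    rw [uIcc_of_le (by linarith : x - d ≤ x + d)] at hz
    exact ⟨z, hz, hfz⟩

end Inverse

section Inverse2

variable {I : Set ℝ} {f f' : ℝ → ℝ}

lemma continuousAt_invFunOn (hIopen : IsOpen I) (hIconn : I.OrdConnected)
    (hcont : ContinuousOn f I) (hinj : InjOn f I) {x : ℝ} (hx : x ∈ I) :
    ContinuousAt (invFunOn f I) (f x) := by
  have hval : invFunOn f I (f x) = x := hinj.leftInvOn_invFunOn hx
  rw [ContinuousAt, hval, Metric.tendsto_nhds]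
  intro ε hε
  obtain ⟨a, b, ha, hb, hax, hxb, haε, hbε, hIcc, hfx, hsurj⟩ :=
    localFrame hIopen hIconn hcont hinj hx hε
  have hJ : Ioo (min (f a) (f b)) (max (f a) (f b)) ∈ 𝓝 (f x) := isOpen_Ioo.mem_nhds hfx
  filter_upwards [hJ] with y hy
  obtain ⟨z, hz, hfz⟩ := hsurj y hy
  have : invFunOn f I y = z := by rw [← hfz]; exact hinj.leftInvOn_invFunOn (hIcc hz)
  rw [this, Real.dist_eq, abs_lt, mem_Icc] at *
  constructor <;> linarith [hz.1, hz.2]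

/-- Local differentiability package for `invFunOn f I` near `f x`. -/
lemma invFunOn_pack (hIopen : IsOpen I) (hIconn : I.OrdConnected)
    (hf : ∀ x ∈ I, HasDerivAt f (f' x) x) (hf'0 : ∀ x ∈ I, f' x ≠ 0)
    {x : ℝ} (hx : x ∈ I) :
    ∃ J : Set ℝ, IsOpen J ∧ f x ∈ J ∧
      ∀ y ∈ J, invFunOn f I y ∈ I ∧ f (invFunOn f I y) = y ∧
        HasDerivAt (invFunOn f I) ((f' (invFunOn f I y))⁻¹) y := by
  have hcont : ContinuousOn f I := fun y hy => (hf y hy).continuousAt.continuousWithinAt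
  have hinj : InjOn f I := injOn_of_deriv_ne_zero hIconn hf hf'0
  obtain ⟨a, b, ha, hb, hax, hxb, _, _, hIcc, hfx, hsurj⟩ :=
    localFrame hIopen hIconn hcont hinj hx one_pos
  refine ⟨Ioo (min (f a) (f b)) (max (f a) (f b)), isOpen_Ioo, hfx, fun y hy => ?_⟩
  obtain ⟨z, hz, hfz⟩ := hsurj y hy
  have hzI : z ∈ I := hIcc hz
  have hval : invFunOn f I y = z := by rw [← hfz]; exact hinj.leftInvOn_invFunOn hzI
  refine ⟨hval ▸ hzI, by rw [hval, hfz], ?_⟩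
  have hcinv : ContinuousAt (invFunOn f I) y := by
    rw [← hfz]; exact continuousAt_invFunOn hIopen hIconn hcont hinj hzI
  have hder : HasDerivAt f (f' (invFunOn f I y)) (invFunOn f I y) := by
    rw [hval]; exact hf z hzI
  refine HasDerivAt.of_local_left_inverse hcinv hder (by rw [hval]; exact hf'0 z hzI) ?_
  filter_upwards [isOpen_Ioo.mem_nhds hy] with w hw
  obtain ⟨zw, hzw, hfzw⟩ := hsurj w hw
  rw [← hfzw, hinj.leftInvOn_invFunOn (hIcc hzw)]

end Inverse2

/-- Second order expansion package for one side of the comparison. -/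
lemma sidePack {I : Set ℝ} (hIopen : IsOpen I) (hIconn : I.OrdConnected)
    {f f' f'' : ℝ → ℝ}
    (hf : ∀ y ∈ I, HasDerivAt f (f' y) y) (hf2 : ∀ y ∈ I, HasDerivAt f' (f'' y) y)
    (hf'0 : ∀ y ∈ I, f' y ≠ 0)
    {pi pi' : ℝ → ℝ} (hpi : ∀ y ∈ I, HasDerivAt pi (pi' y) y)
    (hpi'c : ContinuousOn pi' I) (hpipos : ∀ y ∈ I, 0 < pi y)
    {C : ℝ} (hC : 0 < C) {x : ℝ} (hx : x ∈ I)
    (Ab : ℝ → ℝ)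
    (hAb : Ab = fun y => invFunOn f I ((pi y * f y + C * f x) / (pi y + C))) :
    ∃ A' : ℝ → ℝ,
      (∀ᶠ y in 𝓝 x, HasDerivAt Ab (A' y) y) ∧ Ab x = x ∧ A' x = pi x / (pi x + C) ∧
      HasDerivAt A' ((1 - pi x / (pi x + C)) *
        (2 * (pi' x / (pi x + C)) + f'' x / f' x * (pi x / (pi x + C)))) x := by
  obtain ⟨J, hJopen, hJfx, hJ⟩ := invFunOn_pack hIopen hIconn hf hf'0 hx
  have hpix0 : 0 < pi x := hpipos x hx
  have hp0 : 0 < pi x + C := by linarith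
  have hp0' : pi x + C ≠ 0 := ne_of_gt hp0
  have hinj : InjOn f I := injOn_of_deriv_ne_zero hIconn hf hf'0
  have hhx : (pi x * f x + C * f x) / (pi x + C) = f x := by field_simp
  have hzxval : invFunOn f I ((pi x * f x + C * f x) / (pi x + C)) = x := by
    rw [hhx]; exact hinj.leftInvOn_invFunOn hx
  have hAx : Ab x = x := by rw [hAb]; exact hzxval
  have hWc : ContinuousAt (fun y => pi y + C) x := (hpi x hx).continuousAt.add continuousAt_const
  have hhc : ContinuousAt (fun y => (pi y * f y + C * f x) / (pi y + C)) x :=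
    ContinuousAt.div (((hpi x hx).continuousAt.mul (hf x hx).continuousAt).add
      continuousAt_const) hWc hp0'
  have hEmem : ∀ᶠ y in 𝓝 x, y ∈ I ∧ 0 < pi y + C ∧
      ((pi y * f y + C * f x) / (pi y + C)) ∈ J := by
    have h1 : ∀ᶠ y in 𝓝 x, y ∈ I := hIopen.mem_nhds hx
    have h2 : ∀ᶠ y in 𝓝 x, 0 < pi y + C := hWc.eventually (p := fun z => 0 < z)
      (lt_mem_nhds hp0)
    have hT : Filter.Tendsto (fun y => (pi y * f y + C * f x) / (pi y + C)) (𝓝 x) (𝓝 (f x)) := by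
      have := hhc
      unfold ContinuousAt at this
      rw [show ((fun y => (pi y * f y + C * f x) / (pi y + C)) x) = f x by
        show (pi x * f x + C * f x) / (pi x + C) = f x; exact hhx] at this
      exact this
    have h3 : ∀ᶠ y in 𝓝 x, ((pi y * f y + C * f x) / (pi y + C)) ∈ J :=
      hT.eventually (p := fun z => z ∈ J) (hJopen.mem_nhds hJfx)
    filter_upwards [h1, h2, h3] with y hy1 hy2 hy3
    exact ⟨hy1, hy2, hy3⟩
  -- derivative of the inner quotient
  have hEd : ∀ᶠ y in 𝓝 x, HasDerivAt (fun z => (pi z * f z + C * f x) / (pi z + C))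
      (((pi' y * (f y - f x) + pi y * f' y) * (pi y + C) - pi y * (f y - f x) * pi' y)
        / (pi y + C) ^ 2) y := by
    filter_upwards [hEmem] with y hy
    have hW : (pi y + C) ≠ 0 := ne_of_gt hy.2.1
    have hd := (((hpi y hy.1).mul (hf y hy.1)).add_const (C * f x)).div
      ((hpi y hy.1).add_const C) hW
    refine hd.congr_deriv ?_
    simp only [Pi.mul_apply]
    field_simp
    ring
  set A' : ℝ → ℝ := fun y => (f' (invFunOn f I ((pi y * f y + C * f x) / (pi y + C))))⁻¹ *
      (((pi' y * (f y - f x) + pi y * f' y) * (pi y + C) - pi y * (f y - f x) * pi' y)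
        / (pi y + C) ^ 2) with hA'def
  have hAder : ∀ᶠ y in 𝓝 x, HasDerivAt Ab (A' y) y := by
    filter_upwards [hEmem, hEd] with y hy hyd
    have hfinvd := (hJ _ hy.2.2).2.2
    have hcomp := HasDerivAt.comp y hfinvd hyd
    rw [hAb]
    exact hcomp
  have hA'x : A' x = pi x / (pi x + C) := by
    rw [hA'def]
    simp only [hzxval, sub_self, mul_zero, zero_mul, zero_add, add_zero]
    field_simp [hf'0 x hx]
    ring
  refine ⟨A', hAder, hAx, hA'x, ?_⟩
  -- now differentiate A' at x
  have hfx' := hf x hx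
  have hfx'' := hf2 x hx
  have hpix := hpi x hx
  have hpi'x : ContinuousAt pi' x := (hpi'c x hx).continuousAt (hIopen.mem_nhds hx)
  have hN : HasDerivAt (fun y => pi y * (f y - f x)) (pi x * f' x) x := by
    have := hpix.mul (hfx'.sub_const (f x))
    exact this.congr_deriv (by simp)
  have hN'1 : HasDerivAt (fun y => pi' y * (f y - f x)) (pi' x * f' x) x := by
    have := hasDerivAt_mul_vanish hpi'x (hfx'.sub_const (f x)) (by simp)
    simpa using this
  have hN'2 : HasDerivAt (fun y => pi y * f' y) (pi' x * f' x + pi x * f'' x) x :=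
    hpix.mul hfx''
  have hN' : HasDerivAt (fun y => pi' y * (f y - f x) + pi y * f' y)
      (pi' x * f' x + (pi' x * f' x + pi x * f'' x)) x := hN'1.add hN'2
  have hNpi' : HasDerivAt (fun y => pi y * (f y - f x) * pi' y) (pi' x * (pi x * f' x)) x := by
    have := hasDerivAt_mul_vanish hpi'x hN (by simp)
    exact this.congr_of_eventuallyEq (Filter.Eventually.of_forall fun y => by ring)
  have hW : HasDerivAt (fun y => pi y + C) (pi' x) x := hpix.add_const C
  have hG := (hN'.mul hW).sub hNpi'
  have hh'd := hG.div (hW.pow 2) (pow_ne_zero 2 hp0')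
  have hzd : HasDerivAt (fun y => invFunOn f I ((pi y * f y + C * f x) / (pi y + C)))
      (pi x / (pi x + C)) x := by
    have h0 := hAder.self_of_nhds
    rw [hA'x, hAb] at h0
    exact h0
  have hf2z : HasDerivAt f' (f'' x) (invFunOn f I ((pi x * f x + C * f x) / (pi x + C))) := by
    rw [hzxval]; exact hfx''
  have hfz : HasDerivAt (fun y => f' (invFunOn f I ((pi y * f y + C * f x) / (pi y + C))))
      (f'' x * (pi x / (pi x + C))) x := HasDerivAt.comp x hf2z hzd
  have hwinv := hfz.inv (by rw [hzxval]; exact hf'0 x hx)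
  have final := hwinv.mul hh'd
  rw [hA'def]
  refine final.congr_deriv ?_
  simp only [Pi.mul_apply, Pi.sub_apply, Pi.add_apply, Pi.div_apply, Pi.pow_apply, Pi.inv_apply,
    Nat.cast_ofNat]
  rw [hzxval]
  simp only [sub_self, mul_zero, zero_mul, zero_add, add_zero]
  field_simp [hf'0 x hx, hp0']
  ring

lemma update_sum_eval {n : ℕ} (r : Fin n → ℝ → ℝ) (F : ℝ → ℝ) (x y : ℝ) (i : Fin n) :
    ∑ j, r j (Function.update (fun _ => x) i y j) * F (Function.update (fun _ => x) i y j)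
      = r i y * F y + (∑ j ∈ Finset.univ.erase i, r j x) * F x := by
  rw [← Finset.add_sum_erase _ _ (Finset.mem_univ i), Function.update_self, Finset.sum_mul]
  congr 1
  refine Finset.sum_congr rfl fun j hj => ?_
  rw [Function.update_of_ne (Finset.ne_of_mem_erase hj)]

lemma update_sum_eval' {n : ℕ} (r : Fin n → ℝ → ℝ) (x y : ℝ) (i : Fin n) :
    ∑ j, r j (Function.update (fun _ => x) i y j)
      = r i y + ∑ j ∈ Finset.univ.erase i, r j x := by
  rw [← Finset.add_sum_erase _ _ (Finset.mem_univ i), Function.update_self]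
  congr 1
  refine Finset.sum_congr rfl fun j hj => ?_
  rw [Function.update_of_ne (Finset.ne_of_mem_erase hj)]

lemma keyIneq {n : ℕ} (hn : 2 ≤ n) (I : Set ℝ) (hIopen : IsOpen I)
    (hIconn : I.OrdConnected)
    (f f' f'' g g' g'' : ℝ → ℝ) (p p' q q' : Fin n → ℝ → ℝ)
    (hf : ∀ x ∈ I, HasDerivAt f (f' x) x) (hf2 : ∀ x ∈ I, HasDerivAt f' (f'' x) x)
    (hf'0 : ∀ x ∈ I, f' x ≠ 0)
    (hg : ∀ x ∈ I, HasDerivAt g (g' x) x) (hg2 : ∀ x ∈ I, HasDerivAt g' (g'' x) x)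
    (hg'0 : ∀ x ∈ I, g' x ≠ 0)
    (hp : ∀ i, ∀ x ∈ I, 0 < p i x) (hq : ∀ i, ∀ x ∈ I, 0 < q i x)
    (hpd : ∀ i, ∀ x ∈ I, HasDerivAt (p i) (p' i x) x)
    (hpd' : ∀ i, ContinuousOn (p' i) I)
    (hqd : ∀ i, ∀ x ∈ I, HasDerivAt (q i) (q' i x) x)
    (hqd' : ∀ i, ContinuousOn (q' i) I)
    (hloc : LocallySmaller I (bajMean I f p) (bajMean I g q))
    {x : ℝ} (hx : x ∈ I) :
    2 * ((∑ j, p' j x) / (∑ j, p j x)) + f'' x / f' x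
      ≤ 2 * ((∑ j, q' j x) / (∑ j, q j x)) + g'' x / g' x := by
  obtain ⟨U, hUopen, hUsub, hUdiag, hUle⟩ := hloc
  have hnfin : Nonempty (Fin n) := ⟨⟨0, by omega⟩⟩
  have hP0 : 0 < ∑ j, p j x := Finset.sum_pos (fun j _ => hp j x hx) Finset.univ_nonempty
  have hQ0 : 0 < ∑ j, q j x := Finset.sum_pos (fun j _ => hq j x hx) Finset.univ_nonempty
  have main : ∀ i : Fin n,
      2 * (p' i x / (∑ j, p j x)) + f'' x / f' x * (p i x / (∑ j, p j x))
        ≤ 2 * (q' i x / (∑ j, q j x)) + g'' x / g' x * (p i x / (∑ j, p j x)) := by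
    intro i
    set Cp := ∑ j ∈ Finset.univ.erase i, p j x with hCpdef
    set Cq := ∑ j ∈ Finset.univ.erase i, q j x with hCqdef
    have herase : (Finset.univ.erase i).Nonempty := by
      apply Finset.card_pos.mp
      rw [Finset.card_erase_of_mem (Finset.mem_univ i)]
      simp only [Finset.card_univ, Fintype.card_fin]
      omega
    have hCp : 0 < Cp := Finset.sum_pos (fun j _ => hp j x hx) herase
    have hCq : 0 < Cq := Finset.sum_pos (fun j _ => hq j x hx) herase
    have hsum_p : p i x + Cp = ∑ j, p j x := by
      rw [hCpdef]; exact Finset.add_sum_erase Finset.univ (fun j => p j x) (Finset.mem_univ i)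
    have hsum_q : q i x + Cq = ∑ j, q j x := by
      rw [hCqdef]; exact Finset.add_sum_erase Finset.univ (fun j => q j x) (Finset.mem_univ i)
    obtain ⟨A', hAder, hAx, hA'x, hA2⟩ := sidePack hIopen hIconn hf hf2 hf'0 (hpd i)
      (hpd' i) (hp i) hCp hx
      (fun y => invFunOn f I ((p i y * f y + Cp * f x) / (p i y + Cp))) rfl
    obtain ⟨B', hBder, hBx, hB'x, hB2⟩ := sidePack hIopen hIconn hg hg2 hg'0 (hqd i)
      (hqd' i) (hq i) hCq hx
      (fun y => invFunOn g I ((q i y * g y + Cq * g x) / (q i y + Cq))) rfl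
    have hbajf : ∀ y, bajMean I f p (Function.update (fun _ => x) i y)
        = invFunOn f I ((p i y * f y + Cp * f x) / (p i y + Cp)) := by
      intro y
      unfold bajMean
      rw [update_sum_eval, update_sum_eval']
    have hbajg : ∀ y, bajMean I g q (Function.update (fun _ => x) i y)
        = invFunOn g I ((q i y * g y + Cq * g x) / (q i y + Cq))  := by
      intro y
      unfold bajMean
      rw [update_sum_eval, update_sum_eval']
    have hup : ∀ᶠ y in 𝓝 x, Function.update (fun _ => x) i y ∈ U := by
      have hcont : Continuous (fun y : ℝ => Function.update (fun _ : Fin n => x) i y) :=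
        continuous_const.update i continuous_id
      have h0 : Function.update (fun _ : Fin n => x) i x = fun _ => x := by
        funext j
        simp [Function.update_apply]
      have hT : Filter.Tendsto (fun y : ℝ => Function.update (fun _ : Fin n => x) i y)
          (𝓝 x) (𝓝 (fun _ => x)) := by
        have h' := hcont.continuousAt (x := x)
        unfold ContinuousAt at h'
        simpa only [h0] using h'
      exact hT.eventually (p := fun z => z ∈ U) (hUopen.mem_nhds (hUdiag x hx))
    have hmin : ∀ᶠ y in 𝓝 x,
        (fun z => invFunOn g I ((q i z * g z + Cq * g x) / (q i z + Cq))
          - invFunOn f I ((p i z * f z + Cp * f x) / (p i z + Cp))) x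
        ≤ (fun z => invFunOn g I ((q i z * g z + Cq * g x) / (q i z + Cq))
          - invFunOn f I ((p i z * f z + Cp * f x) / (p i z + Cp))) y := by
      filter_upwards [hup] with y hy
      show invFunOn g I ((q i x * g x + Cq * g x) / (q i x + Cq))
          - invFunOn f I ((p i x * f x + Cp * f x) / (p i x + Cp)) ≤ _
      rw [hAx, hBx, sub_self]
      have := hUle _ hy
      rw [hbajf, hbajg] at this
      linarith
    have hDder : ∀ᶠ y in 𝓝 x, HasDerivAt
        (fun z => invFunOn g I ((q i z * g z + Cq * g x) / (q i z + Cq))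
          - invFunOn f I ((p i z * f z + Cp * f x) / (p i z + Cp))) (B' y - A' y) y := by
      filter_upwards [hAder, hBder] with y h1 h2
      exact h2.sub h1
    obtain ⟨h1, h2⟩ := second_deriv_test hDder (hB2.sub hA2) hmin
    have hratio : q i x / (q i x + Cq) = p i x / (p i x + Cp) := by
      rw [← hB'x, ← hA'x]
      linarith
    rw [hratio] at h2
    have hr1 : p i x / (p i x + Cp) < 1 := by
      rw [div_lt_one (by linarith [hp i x hx])]
      linarith [hp i x hx]
    have h3 : 2 * (p' i x / (p i x + Cp)) + f'' x / f' x * (p i x / (p i x + Cp))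
        ≤ 2 * (q' i x / (q i x + Cq)) + g'' x / g' x * (p i x / (p i x + Cp)) := by
      nlinarith [h2, hr1]
    rw [hsum_p, hsum_q] at h3
    have hratio' : q i x / (∑ j, q j x) = p i x / (∑ j, p j x) := by
      rw [← hsum_p, ← hsum_q]; exact hratio
    exact h3
  have hsum := Finset.sum_le_sum (fun i (_ : i ∈ Finset.univ) => main i)
  have e1 : ∑ i, (2 * (p' i x / (∑ j, p j x)) + f'' x / f' x * (p i x / (∑ j, p j x)))
      = 2 * ((∑ j, p' j x) / (∑ j, p j x)) + f'' x / f' x := by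
    rw [Finset.sum_add_distrib, ← Finset.mul_sum, ← Finset.mul_sum, ← Finset.sum_div,
      ← Finset.sum_div, div_self (ne_of_gt hP0), mul_one]
  have e2 : ∑ i, (2 * (q' i x / (∑ j, q j x)) + g'' x / g' x * (p i x / (∑ j, p j x)))
      = 2 * ((∑ j, q' j x) / (∑ j, q j x)) + g'' x / g' x := by
    rw [Finset.sum_add_distrib, ← Finset.mul_sum, ← Finset.mul_sum, ← Finset.sum_div,
      ← Finset.sum_div, div_self (ne_of_gt hP0), mul_one]
  rw [e1, e2] at hsum
  exact hsum

lemma signPack {f' : ℝ → ℝ} {c x : ℝ} (h2 : HasDerivAt f' c x) (h0 : f' x ≠ 0) :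
    ∃ e : ℝ, (∀ᶠ y in 𝓝 x, |f' y| = e * f' y) ∧ 0 < e * f' x := by
  have hc : ContinuousAt f' x := h2.continuousAt
  rcases h0.lt_or_gt with hneg | hpos
  · refine ⟨-1, ?_, by nlinarith⟩
    have hev := hc.eventually (p := fun z => z < 0) (gt_mem_nhds hneg)
    filter_upwards [hev] with y hy
    rw [abs_of_neg hy]; ring
  · refine ⟨1, ?_, by nlinarith⟩
    have hev := hc.eventually (p := fun z => 0 < z) (lt_mem_nhds hpos)
    filter_upwards [hev] with y hy
    rw [abs_of_pos hy]; ring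


/-- Theorem 1NC, second-order necessary condition: if `f, g` are twice differentiable
with nonvanishing first derivatives, `p, q : I → ℝ₊ⁿ` are continuously differentiable
and `A_{f,p}` is locally smaller than `A_{g,q}`, then `q₀²|g'|/(p₀²|f'|)` is
increasing on `I`. -/
theorem stmt6 {n : ℕ} (hn : 2 ≤ n) (I : Set ℝ) (hIopen : IsOpen I)
    (hIconn : I.OrdConnected) (hIne : I.Nonempty)
    (f f' f'' g g' g'' : ℝ → ℝ) (p p' q q' : Fin n → ℝ → ℝ)
    (hf : ∀ x ∈ I, HasDerivAt f (f' x) x) (hf2 : ∀ x ∈ I, HasDerivAt f' (f'' x) x)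
    (hf'0 : ∀ x ∈ I, f' x ≠ 0)
    (hg : ∀ x ∈ I, HasDerivAt g (g' x) x) (hg2 : ∀ x ∈ I, HasDerivAt g' (g'' x) x)
    (hg'0 : ∀ x ∈ I, g' x ≠ 0)
    (hp : ∀ i, ∀ x ∈ I, 0 < p i x) (hq : ∀ i, ∀ x ∈ I, 0 < q i x)
    (hpd : ∀ i, ∀ x ∈ I, HasDerivAt (p i) (p' i x) x)
    (hpd' : ∀ i, ContinuousOn (p' i) I)
    (hqd : ∀ i, ∀ x ∈ I, HasDerivAt (q i) (q' i x) x)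
    (hqd' : ∀ i, ContinuousOn (q' i) I)
    (hloc : LocallySmaller I (bajMean I f p) (bajMean I g q)) :
    MonotoneOn (fun x => (∑ j, q j x) ^ 2 * |g' x| / ((∑ j, p j x) ^ 2 * |f' x|)) I := by
  have hconv : Convex ℝ I := convex_iff_ordConnected.mpr hIconn
  have hF : ∀ x ∈ I, ∃ d, 0 ≤ d ∧
      HasDerivAt (fun y => (∑ j, q j y) ^ 2 * |g' y| / ((∑ j, p j y) ^ 2 * |f' y|)) d x := by
    intro x hx
    have hnfin : Nonempty (Fin n) := ⟨⟨0, by omega⟩⟩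
    have hP0 : 0 < ∑ j, p j x := Finset.sum_pos (fun j _ => hp j x hx) Finset.univ_nonempty
    have hQ0 : 0 < ∑ j, q j x := Finset.sum_pos (fun j _ => hq j x hx) Finset.univ_nonempty
    obtain ⟨ef, heff, hefpos⟩ := signPack (hf2 x hx) (hf'0 x hx)
    obtain ⟨eg, hegg, hegpos⟩ := signPack (hg2 x hx) (hg'0 x hx)
    have hQd : HasDerivAt (fun y => ∑ j, q j y) (∑ j, q' j x) x :=
      HasDerivAt.fun_sum (fun j _ => hqd j x hx)
    have hPd : HasDerivAt (fun y => ∑ j, p j y) (∑ j, p' j x) x :=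
      HasDerivAt.fun_sum (fun j _ => hpd j x hx)
    have hu := (hQd.pow 2).mul ((hg2 x hx).const_mul eg)
    have hv := (hPd.pow 2).mul ((hf2 x hx).const_mul ef)
    have hvx : ((∑ j, p j x) ^ 2 * (ef * f' x)) ≠ 0 := by positivity
    have hG := hu.div hv hvx
    have hFG : (fun y => (∑ j, q j y) ^ 2 * |g' y| / ((∑ j, p j y) ^ 2 * |f' y|))
        =ᶠ[𝓝 x] (fun y => (∑ j, q j y) ^ 2 * (eg * g' y) / ((∑ j, p j y) ^ 2 * (ef * f' y))) := by
      filter_upwards [heff, hegg] with y h1 h2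
      rw [h1, h2]
    refine ⟨_, ?_, hG.congr_of_eventuallyEq hFG⟩
    have key := keyIneq hn I hIopen hIconn f f' f'' g g' g'' p p' q q' hf hf2 hf'0 hg hg2
      hg'0 hp hq hpd hpd' hqd hqd' hloc hx
    rw [div_nonneg_iff]
    left
    constructor
    · norm_num
      have hnum : ((2 * ∑ j, q j x) * (∑ j, q' j x) * (eg * g' x)
          + (∑ j, q j x) ^ 2 * (eg * g'' x)) * ((∑ j, p j x) ^ 2 * (ef * f' x))
          - (∑ j, q j x) ^ 2 * (eg * g' x)
            * ((2 * ∑ j, p j x) * (∑ j, p' j x) * (ef * f' x) + (∑ j, p j x) ^ 2 * (ef * f'' x))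
          = (ef * f' x) * (eg * g' x) * (∑ j, q j x) ^ 2 * (∑ j, p j x) ^ 2
            * ((2 * ((∑ j, q' j x) / (∑ j, q j x)) + g'' x / g' x)
              - (2 * ((∑ j, p' j x) / (∑ j, p j x)) + f'' x / f' x)) := by
        field_simp [hf'0 x hx, hg'0 x hx, hP0.ne', hQ0.ne']
      have hE : 0 ≤ (2 * ((∑ j, q' j x) / (∑ j, q j x)) + g'' x / g' x)
          - (2 * ((∑ j, p' j x) / (∑ j, p j x)) + f'' x / f' x) := by linarith
      have hpos : 0 ≤ (ef * f' x) * (eg * g' x) * (∑ j, q j x) ^ 2 * (∑ j, p j x) ^ 2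
            * ((2 * ((∑ j, q' j x) / (∑ j, q j x)) + g'' x / g' x)
              - (2 * ((∑ j, p' j x) / (∑ j, p j x)) + f'' x / f' x)) := by positivity
      linarith
    · positivity
  apply monotoneOn_of_deriv_nonneg hconv
  · intro x hx
    obtain ⟨d, _, hd⟩ := hF x hx
    exact hd.continuousAt.continuousWithinAt
  · intro x hx
    rw [hIopen.interior_eq] at hx
    obtain ⟨d, _, hd⟩ := hF x hx
    exact hd.differentiableAt.differentiableWithinAt
  · intro x hx
    rw [hIopen.interior_eq] at hx
    obtain ⟨d, hd0, hd⟩ := hF x hx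
    rw [hd.deriv]
    exact hd0
end

section
/- Let n ≥ 2, let f, g : I → ℝ be twice continuously differentiable functions with nowhere vanishing first derivatives, and let p, q : I → ℝ_+^n be twice continuously differentiable. If p_i/p_0 = q_i/q_0 on I for every i ∈ {1,…,n} and the function x ↦ q_0(x)²|g'(x)| / (p_0(x)²|f'(x)|) has an everywhere positive derivative on I, then A_{f,p} is locally smaller than A_{g,q}. -/
open Set Function Real

/-- A continuous nonvanishing function on an order-connected set has constant sign. -/
lemma baj_sign_lemma {I : Set ℝ} (hIconn : I.OrdConnected) {h : ℝ → ℝ}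
    (hc : ContinuousOn h I) (h0 : ∀ x ∈ I, h x ≠ 0) {a : ℝ} (ha : a ∈ I) :
    ∃ σ : ℝ, (σ = 1 ∨ σ = -1) ∧ ∀ x ∈ I, 0 < σ * h x := by
  rcases (h0 a ha).lt_or_gt with hneg | hpos
  · refine ⟨-1, Or.inr rfl, fun x hx => ?_⟩
    rcases (h0 x hx).lt_or_gt with hx' | hx'
    · linarith
    · exfalso
      have hsub := hIconn.uIcc_subset hx ha
      have h0mem : (0:ℝ) ∈ uIcc (h x) (h a) :=
        Set.mem_uIcc.mpr (Or.inr ⟨hneg.le, hx'.le⟩)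
      obtain ⟨c, hc1, hc2⟩ := intermediate_value_uIcc (hc.mono hsub) h0mem
      exact h0 c (hsub hc1) hc2
  · refine ⟨1, Or.inl rfl, fun x hx => ?_⟩
    rcases (h0 x hx).lt_or_gt with hx' | hx'
    · exfalso
      have hsub := hIconn.uIcc_subset hx ha
      have h0mem : (0:ℝ) ∈ uIcc (h x) (h a) :=
        Set.mem_uIcc.mpr (Or.inl ⟨hx'.le, hpos.le⟩)
      obtain ⟨c, hc1, hc2⟩ := intermediate_value_uIcc (hc.mono hsub) h0mem
      exact h0 c (hsub hc1) hc2
    · linarith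

/-- If `φ` vanishes to first order at `m` and has positive second derivative on an
open convex set `B`, then `φ ≥ 0` on `B`. -/
lemma baj_conv_nonneg {B : Set ℝ} (hB : Convex ℝ B) (hBo : IsOpen B)
    (φ φ' φ'' : ℝ → ℝ)
    (hd1 : ∀ x ∈ B, HasDerivAt φ (φ' x) x)
    (hd2 : ∀ x ∈ B, HasDerivAt φ' (φ'' x) x)
    (hpos : ∀ x ∈ B, 0 < φ'' x)
    {m : ℝ} (hm : m ∈ B) (h0 : φ m = 0) (h1 : φ' m = 0) :
    ∀ t ∈ B, 0 ≤ φ t := by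
  have hBconn : B.OrdConnected := convex_iff_ordConnected.mp hB
  have hmono : StrictMonoOn φ' B := by
    apply strictMonoOn_of_deriv_pos hB
    · exact fun x hx => (hd2 x hx).continuousAt.continuousWithinAt
    · intro x hx
      rw [hBo.interior_eq] at hx
      rw [(hd2 x hx).deriv]; exact hpos x hx
  intro t ht
  rcases le_total m t with hle | hle
  · have hIcc : Icc m t ⊆ B := hBconn.out hm ht
    have hmon : MonotoneOn φ (Icc m t) := by
      apply monotoneOn_of_deriv_nonneg (convex_Icc m t)
      · exact fun x hx => (hd1 x (hIcc hx)).continuousAt.continuousWithinAt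
      · intro x hx
        rw [interior_Icc] at hx
        exact ((hd1 x (hIcc (Ioo_subset_Icc_self hx))).differentiableAt).differentiableWithinAt
      · intro x hx
        rw [interior_Icc] at hx
        have hxB : x ∈ B := hIcc (Ioo_subset_Icc_self hx)
        rw [(hd1 x hxB).deriv]
        have := hmono hm hxB hx.1
        linarith
    have := hmon (left_mem_Icc.mpr hle) (right_mem_Icc.mpr hle) hle
    linarith
  · have hIcc : Icc t m ⊆ B := hBconn.out ht hm
    have hmon : AntitoneOn φ (Icc t m) := by
      apply antitoneOn_of_deriv_nonpos (convex_Icc t m)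
      · exact fun x hx => (hd1 x (hIcc hx)).continuousAt.continuousWithinAt
      · intro x hx
        rw [interior_Icc] at hx
        exact ((hd1 x (hIcc (Ioo_subset_Icc_self hx))).differentiableAt).differentiableWithinAt
      · intro x hx
        rw [interior_Icc] at hx
        have hxB : x ∈ B := hIcc (Ioo_subset_Icc_self hx)
        rw [(hd1 x hxB).deriv]
        have := hmono hxB hm hx.2
        linarith
    have := hmon (left_mem_Icc.mpr hle) (right_mem_Icc.mpr hle) hle
    linarith

set_option maxHeartbeats 1000000 in
lemma baj_key {n : ℕ} (I : Set ℝ) (hIopen : IsOpen I) (hIconn : I.OrdConnected)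
    (f f' f'' g g' g'' : ℝ → ℝ) (p p' p'' q q' q'' : Fin n → ℝ → ℝ)
    [hne : Nonempty (Fin n)]
    (hf : ∀ x ∈ I, HasDerivAt f (f' x) x) (hf2 : ∀ x ∈ I, HasDerivAt f' (f'' x) x)
    (hf'0 : ∀ x ∈ I, f' x ≠ 0)
    (hg : ∀ x ∈ I, HasDerivAt g (g' x) x) (hg2 : ∀ x ∈ I, HasDerivAt g' (g'' x) x)
    (hg'0 : ∀ x ∈ I, g' x ≠ 0)
    (hp : ∀ i, ∀ x ∈ I, 0 < p i x) (hq : ∀ i, ∀ x ∈ I, 0 < q i x)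
    (hpd : ∀ i, ∀ x ∈ I, HasDerivAt (p i) (p' i x) x)
    (hpd2 : ∀ i, ∀ x ∈ I, HasDerivAt (p' i) (p'' i x) x)
    (hpd2c : ∀ i, ContinuousOn (p'' i) I)
    (hqd : ∀ i, ∀ x ∈ I, HasDerivAt (q i) (q' i x) x)
    (hqd2 : ∀ i, ∀ x ∈ I, HasDerivAt (q' i) (q'' i x) x)
    (hqd2c : ∀ i, ContinuousOn (q'' i) I)
    (hratio : ∀ i : Fin n, ∀ x ∈ I, p i x / (∑ j, p j x) = q i x / (∑ j, q j x))
    (hposder : ∀ x ∈ I, ∃ d : ℝ, 0 < d ∧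
      HasDerivAt (fun y => (∑ j, q j y) ^ 2 * |g' y| / ((∑ j, p j y) ^ 2 * |f' y|)) d x)
    (hf2c : ContinuousOn f'' I) (hg2c : ContinuousOn g'' I)
    (σf σg : ℝ) (hσf1 : σf = 1 ∨ σf = -1) (hσg1 : σg = 1 ∨ σg = -1)
    (hσf : ∀ x ∈ I, 0 < σf * f' x) (hσg : ∀ x ∈ I, 0 < σg * g' x)
    {a : ℝ} (ha : a ∈ I) :
    ∃ δ : ℝ, 0 < δ ∧ Ioo (a - δ) (a + δ) ⊆ I ∧
      ∀ x : Fin n → ℝ, (∀ i, x i ∈ Ioo (a - δ) (a + δ)) →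
        bajMean I f p x ≤ bajMean I g q x := by
  classical
  have hIconv : Convex ℝ I := convex_iff_ordConnected.mpr hIconn
  -- continuity of the basic data
  have cf : ContinuousOn f I := fun x hx => (hf x hx).continuousAt.continuousWithinAt
  have cg : ContinuousOn g I := fun x hx => (hg x hx).continuousAt.continuousWithinAt
  have cf' : ContinuousOn f' I := fun x hx => (hf2 x hx).continuousAt.continuousWithinAt
  have cg' : ContinuousOn g' I := fun x hx => (hg2 x hx).continuousAt.continuousWithinAt
  -- sums
  have hP0d : ∀ x ∈ I, HasDerivAt (fun t => ∑ j, p j t) (∑ j, p' j x) x :=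
    fun x hx => HasDerivAt.fun_sum (fun j _ => hpd j x hx)
  have hP1d : ∀ x ∈ I, HasDerivAt (fun t => ∑ j, p' j t) (∑ j, p'' j x) x :=
    fun x hx => HasDerivAt.fun_sum (fun j _ => hpd2 j x hx)
  have hQ0d : ∀ x ∈ I, HasDerivAt (fun t => ∑ j, q j t) (∑ j, q' j x) x :=
    fun x hx => HasDerivAt.fun_sum (fun j _ => hqd j x hx)
  have hQ1d : ∀ x ∈ I, HasDerivAt (fun t => ∑ j, q' j t) (∑ j, q'' j x) x :=
    fun x hx => HasDerivAt.fun_sum (fun j _ => hqd2 j x hx)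
  have hP0pos : ∀ x ∈ I, 0 < ∑ j, p j x :=
    fun x hx => Finset.sum_pos (fun j _ => hp j x hx) Finset.univ_nonempty
  have hQ0pos : ∀ x ∈ I, 0 < ∑ j, q j x :=
    fun x hx => Finset.sum_pos (fun j _ => hq j x hx) Finset.univ_nonempty
  have cP0 : ContinuousOn (fun t => ∑ j, p j t) I :=
    continuousOn_finset_sum _ (fun j _ => fun x hx => (hpd j x hx).continuousAt.continuousWithinAt)
  have cP1 : ContinuousOn (fun t => ∑ j, p' j t) I :=
    continuousOn_finset_sum _ (fun j _ => fun x hx => (hpd2 j x hx).continuousAt.continuousWithinAt)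
  have cP2 : ContinuousOn (fun t => ∑ j, p'' j t) I :=
    continuousOn_finset_sum _ (fun j _ => hpd2c j)
  have cQ0 : ContinuousOn (fun t => ∑ j, q j t) I :=
    continuousOn_finset_sum _ (fun j _ => fun x hx => (hqd j x hx).continuousAt.continuousWithinAt)
  have cQ1 : ContinuousOn (fun t => ∑ j, q' j t) I :=
    continuousOn_finset_sum _ (fun j _ => fun x hx => (hqd2 j x hx).continuousAt.continuousWithinAt)
  have cQ2 : ContinuousOn (fun t => ∑ j, q'' j t) I :=
    continuousOn_finset_sum _ (fun j _ => hqd2c j)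
  -- injectivity of f and "inverse monotonicity" of g
  have strictf : StrictMonoOn (fun x => σf * f x) I := by
    apply strictMonoOn_of_deriv_pos hIconv (continuousOn_const.mul cf)
    intro x hx
    rw [hIopen.interior_eq] at hx
    rw [show deriv ((fun _ => σf) * f) x = σf * f' x from ((hf x hx).const_mul σf).deriv]
    exact hσf x hx
  have strictg : StrictMonoOn (fun x => σg * g x) I := by
    apply strictMonoOn_of_deriv_pos hIconv (continuousOn_const.mul cg)
    intro x hx
    rw [hIopen.interior_eq] at hx
    rw [show deriv ((fun _ => σg) * g) x = σg * g' x from ((hg x hx).const_mul σg).deriv]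
    exact hσg x hx
  have hinj_f : InjOn f I := by
    intro s hs t ht hst
    rcases lt_trichotomy s t with h | h | h
    · exact absurd (strictf hs ht h) (by simp only [hst]; exact lt_irrefl _)
    · exact h
    · exact absurd (strictf ht hs h) (by simp only [hst]; exact lt_irrefl _)
  have hginv : ∀ s ∈ I, ∀ t ∈ I, σg * g s ≤ σg * g t → s ≤ t := by
    intro s hs t ht hle
    by_contra hlt
    push_neg at hlt
    exact absurd (strictg ht hs hlt) (not_lt.mpr hle)
  -- cross-multiplied ratio condition
  have hr' : ∀ i, ∀ t ∈ I, p i t * (∑ j, q j t) = q i t * (∑ j, p j t) := by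
    intro i t ht
    have h := hratio i t ht
    rw [div_eq_div_iff (hP0pos t ht).ne' (hQ0pos t ht).ne'] at h
    exact h
  -- the second-derivative kernel
  set K : ℝ × ℝ → ℝ := fun z =>
    (∑ j, q'' j z.2) * (g z.2 - g z.1) + 2 * (∑ j, q' j z.2) * g' z.2 +
      (∑ j, q j z.2) * g'' z.2 -
      g' z.1 * (∑ j, q j z.1) / (f' z.1 * (∑ j, p j z.1)) *
        ((∑ j, p'' j z.2) * (f z.2 - f z.1) + 2 * (∑ j, p' j z.2) * f' z.2 +
          (∑ j, p j z.2) * f'' z.2) with hK_def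
  have hfst : ∀ {h : ℝ → ℝ}, ContinuousOn h I → ContinuousOn (fun z : ℝ × ℝ => h z.1) (I ×ˢ I) :=
    fun hh => hh.comp continuous_fst.continuousOn (fun z hz => hz.1)
  have hsnd : ∀ {h : ℝ → ℝ}, ContinuousOn h I → ContinuousOn (fun z : ℝ × ℝ => h z.2) (I ×ˢ I) :=
    fun hh => hh.comp continuous_snd.continuousOn (fun z hz => hz.2)
  have hKcont : ContinuousOn K (I ×ˢ I) := by
    rw [hK_def]
    apply ContinuousOn.sub
    · exact (((hsnd cQ2).mul ((hsnd cg).sub (hfst cg))).add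
        ((continuousOn_const.mul (hsnd cQ1)).mul (hsnd cg'))).add
        ((hsnd cQ0).mul (hsnd hg2c))
    · refine ContinuousOn.mul (ContinuousOn.div ((hfst cg').mul (hfst cQ0))
        ((hfst cf').mul (hfst cP0)) ?_) ?_
      · intro z hz
        exact mul_ne_zero (hf'0 _ hz.1) (hP0pos _ hz.1).ne'
      · exact (((hsnd cP2).mul ((hsnd cf).sub (hfst cf))).add
          ((continuousOn_const.mul (hsnd cP1)).mul (hsnd cf'))).add
          ((hsnd cP0).mul (hsnd hf2c))
  have hKaa : 0 < σg * K (a, a) := by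
    obtain ⟨d, hdpos, hE⟩ := hposder a ha
    have habs : (fun y => (∑ j, q j y) ^ 2 * |g' y| / ((∑ j, p j y) ^ 2 * |f' y|)) =ᶠ[nhds a]
        (fun y => σf * σg * ((∑ j, q j y) ^ 2 * g' y) / ((∑ j, p j y) ^ 2 * f' y)) := by
      filter_upwards [hIopen.mem_nhds ha] with y hy
      have h1 : |g' y| = σg * g' y := by
        rcases hσg1 with h | h <;> subst h
        · rw [abs_of_pos (by linarith [hσg y hy])]; ring
        · rw [abs_of_neg (by nlinarith [hσg y hy])]; ring
      have h2 : |f' y| = σf * f' y := by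
        rcases hσf1 with h | h <;> subst h
        · rw [abs_of_pos (by linarith [hσf y hy])]; ring
        · rw [abs_of_neg (by nlinarith [hσf y hy])]; ring
      rw [h1, h2]
      rcases hσf1 with h | h <;> rcases hσg1 with h' | h' <;> subst h <;> subst h' <;>
        field_simp [hf'0 y hy, (hP0pos y hy).ne']
    have hE' : HasDerivAt
        (fun y => σf * σg * ((∑ j, q j y) ^ 2 * g' y) / ((∑ j, p j y) ^ 2 * f' y)) d a :=
      hE.congr_of_eventuallyEq habs.symm
    have hnum : HasDerivAt (fun y => σf * σg * ((∑ j, q j y) ^ 2 * g' y))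
        (σf * σg * ((2 * (∑ j, q j a) * (∑ j, q' j a)) * g' a + (∑ j, q j a) ^ 2 * g'' a)) a := by
      have h := (((hQ0d a ha).pow 2).mul (hg2 a ha)).const_mul (σf * σg)
      refine h.congr_deriv ?_
      simp only [Pi.pow_apply]
      push_cast
      ring
    have hden : HasDerivAt (fun y => (∑ j, p j y) ^ 2 * f' y)
        ((2 * (∑ j, p j a) * (∑ j, p' j a)) * f' a + (∑ j, p j a) ^ 2 * f'' a) a := by
      have h := ((hP0d a ha).pow 2).mul (hf2 a ha)
      refine h.congr_deriv ?_
      simp only [Pi.pow_apply]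
      push_cast
      ring
    have hdenne : (∑ j, p j a) ^ 2 * f' a ≠ 0 :=
      mul_ne_zero (pow_ne_zero 2 (hP0pos a ha).ne') (hf'0 a ha)
    have hdiv := hnum.div hden hdenne
    have hd_eq := hE'.unique hdiv
    have hF1 : f' a ≠ 0 := hf'0 a ha
    have hB0 : (∑ j, p j a) ≠ 0 := (hP0pos a ha).ne'
    have hA0 : (∑ j, q j a) ≠ 0 := (hQ0pos a ha).ne'
    have hKval : σg * K (a, a) = d * ((∑ j, p j a) ^ 2 * (σf * f' a)) / (∑ j, q j a) := by
      rw [hd_eq, hK_def]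
      simp only
      set A0 := ∑ j, q j a
      set A1 := ∑ j, q' j a
      set A2 := ∑ j, q'' j a
      set B0 := ∑ j, p j a
      set B1 := ∑ j, p' j a
      set B2 := ∑ j, p'' j a
      rcases hσf1 with h | h <;> rcases hσg1 with h' | h' <;> subst h <;> subst h' <;>
        field_simp <;> ring
    rw [hKval]
    apply div_pos _ (hQ0pos a ha)
    exact mul_pos hdpos (mul_pos (pow_pos (hP0pos a ha) 2) (hσf a ha))
  have hO : IsOpen ((I ×ˢ I) ∩ (fun z => σg * K z) ⁻¹' Ioi 0) :=
    (continuousOn_const.mul hKcont).isOpen_inter_preimage (hIopen.prod hIopen) isOpen_Ioi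
  obtain ⟨ε, hε, hball⟩ := Metric.isOpen_iff.mp hO (a, a) ⟨⟨ha, ha⟩, hKaa⟩
  have hmemball : ∀ s ∈ Ioo (a - ε) (a + ε), ∀ t ∈ Ioo (a - ε) (a + ε),
      ((s, t) : ℝ × ℝ) ∈ Metric.ball (a, a) ε := by
    intro s hs t ht
    rw [Metric.mem_ball, Prod.dist_eq]
    rw [Set.mem_Ioo] at hs ht
    simp only [Real.dist_eq]
    rw [sup_lt_iff]
    constructor <;> rw [abs_lt] <;> constructor <;> linarith [hs.1, hs.2, ht.1, ht.2]
  have hsubI : Ioo (a - ε) (a + ε) ⊆ I := by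
    intro t ht
    exact (hball (hmemball t ht t ht)).1.1
  have hKpos : ∀ m ∈ Ioo (a - ε) (a + ε), ∀ t ∈ Ioo (a - ε) (a + ε), 0 < σg * K (m, t) :=
    fun m hm t ht => (hball (hmemball m hm t ht)).2
  -- the two-variable inequality on the box
  have hχnn : ∀ m ∈ Ioo (a - ε) (a + ε), ∀ t ∈ Ioo (a - ε) (a + ε),
      0 ≤ σg * ((∑ j, q j t) * (g t - g m) -
        g' m * (∑ j, q j m) / (f' m * (∑ j, p j m)) * ((∑ j, p j t) * (f t - f m))) := by
    intro m hm t ht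
    have hmI : m ∈ I := hsubI hm
    set lam := g' m * (∑ j, q j m) / (f' m * (∑ j, p j m)) with hlam
    have hd1 : ∀ s ∈ I, HasDerivAt
        (fun u => (∑ j, q j u) * (g u - g m) - lam * ((∑ j, p j u) * (f u - f m)))
        ((∑ j, q' j s) * (g s - g m) + (∑ j, q j s) * g' s -
          lam * ((∑ j, p' j s) * (f s - f m) + (∑ j, p j s) * f' s)) s := by
      intro s hs
      have h1 := (hQ0d s hs).mul ((hg s hs).sub_const (g m))
      have h2 := ((hP0d s hs).mul ((hf s hs).sub_const (f m))).const_mul lam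
      have h := h1.sub h2
      exact h
    have hd2 : ∀ s ∈ I, HasDerivAt
        (fun u => (∑ j, q' j u) * (g u - g m) + (∑ j, q j u) * g' u -
          lam * ((∑ j, p' j u) * (f u - f m) + (∑ j, p j u) * f' u))
        (K (m, s)) s := by
      intro s hs
      have h1 := (hQ1d s hs).mul ((hg s hs).sub_const (g m))
      have h2 := (hQ0d s hs).mul (hg2 s hs)
      have h3 := (((hP1d s hs).mul ((hf s hs).sub_const (f m))).add
        ((hP0d s hs).mul (hf2 s hs))).const_mul lam
      have h := (h1.add h2).sub h3
      refine h.congr_deriv ?_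
      rw [hK_def]
      simp only
      ring
    have h0 : σg * ((∑ j, q j m) * (g m - g m) - lam * ((∑ j, p j m) * (f m - f m))) = 0 := by
      simp
    have h1 : σg * ((∑ j, q' j m) * (g m - g m) + (∑ j, q j m) * g' m -
        lam * ((∑ j, p' j m) * (f m - f m) + (∑ j, p j m) * f' m)) = 0 := by
      rw [hlam]
      field_simp [hf'0 m hmI, (hP0pos m hmI).ne']
      try ring
    exact baj_conv_nonneg (convex_Ioo _ _) isOpen_Ioo _ _ _
      (fun s hs => (hd1 s (hsubI hs)).const_mul σg)
      (fun s hs => (hd2 s (hsubI hs)).const_mul σg)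
      (fun s hs => hKpos m hm s hs) hm h0 h1 t ht
  -- conclusion
  refine ⟨ε, hε, hsubI, ?_⟩
  intro x hx
  have hxI : ∀ i, x i ∈ I := fun i => hsubI (hx i)
  have hPsum : 0 < ∑ i, p i (x i) :=
    Finset.sum_pos (fun i _ => hp i _ (hxI i)) Finset.univ_nonempty
  have hQsum : 0 < ∑ i, q i (x i) :=
    Finset.sum_pos (fun i _ => hq i _ (hxI i)) Finset.univ_nonempty
  obtain ⟨j, -, hj⟩ := Finset.exists_min_image Finset.univ (fun i => f (x i)) Finset.univ_nonempty
  obtain ⟨k, -, hk⟩ := Finset.exists_max_image Finset.univ (fun i => f (x i)) Finset.univ_nonempty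
  set vf := (∑ i, p i (x i) * f (x i)) / (∑ i, p i (x i)) with hvf
  have hlow : f (x j) ≤ vf := by
    rw [hvf, le_div_iff₀ hPsum, Finset.mul_sum]
    apply Finset.sum_le_sum
    intro i _
    have := hj i (Finset.mem_univ i)
    nlinarith [hp i (x i) (hxI i)]
  have hhigh : vf ≤ f (x k) := by
    rw [hvf, div_le_iff₀ hPsum, Finset.mul_sum]
    apply Finset.sum_le_sum
    intro i _
    have := hk i (Finset.mem_univ i)
    nlinarith [hp i (x i) (hxI i)]
  have huIccB : uIcc (x j) (x k) ⊆ Ioo (a - ε) (a + ε) :=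
    (Set.ordConnected_Ioo).uIcc_subset (hx j) (hx k)
  have hvmem : vf ∈ uIcc (f (x j)) (f (x k)) := Set.mem_uIcc.mpr (Or.inl ⟨hlow, hhigh⟩)
  obtain ⟨c, hcu, hfc⟩ := intermediate_value_uIcc (cf.mono (huIccB.trans hsubI)) hvmem
  have hcB : c ∈ Ioo (a - ε) (a + ε) := huIccB hcu
  have hcI : c ∈ I := hsubI hcB
  have hexf : ∃ b ∈ I, f b = vf := ⟨c, hcI, hfc⟩
  set m := Function.invFunOn f I vf with hm_def
  have hfm : f m = vf := Function.invFunOn_eq hexf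
  have hmI : m ∈ I := Function.invFunOn_mem hexf
  have hmB : m ∈ Ioo (a - ε) (a + ε) := by
    have h : m = c := hinj_f hmI hcI (by rw [hfm, hfc])
    rw [h]; exact hcB
  obtain ⟨j', -, hj'⟩ := Finset.exists_min_image Finset.univ (fun i => g (x i)) Finset.univ_nonempty
  obtain ⟨k', -, hk'⟩ := Finset.exists_max_image Finset.univ (fun i => g (x i)) Finset.univ_nonempty
  set vg := (∑ i, q i (x i) * g (x i)) / (∑ i, q i (x i)) with hvg
  have hlow' : g (x j') ≤ vg := by
    rw [hvg, le_div_iff₀ hQsum, Finset.mul_sum]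
    apply Finset.sum_le_sum
    intro i _
    have := hj' i (Finset.mem_univ i)
    nlinarith [hq i (x i) (hxI i)]
  have hhigh' : vg ≤ g (x k') := by
    rw [hvg, div_le_iff₀ hQsum, Finset.mul_sum]
    apply Finset.sum_le_sum
    intro i _
    have := hk' i (Finset.mem_univ i)
    nlinarith [hq i (x i) (hxI i)]
  have huIccB' : uIcc (x j') (x k') ⊆ Ioo (a - ε) (a + ε) :=
    (Set.ordConnected_Ioo).uIcc_subset (hx j') (hx k')
  obtain ⟨c', hcu', hgc'⟩ := intermediate_value_uIcc (cg.mono (huIccB'.trans hsubI))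
    (Set.mem_uIcc.mpr (Or.inl ⟨hlow', hhigh'⟩))
  have hexg : ∃ b ∈ I, g b = vg := ⟨c', hsubI (huIccB' hcu'), hgc'⟩
  set N := Function.invFunOn g I vg with hN_def
  have hgN : g N = vg := Function.invFunOn_eq hexg
  have hNI : N ∈ I := Function.invFunOn_mem hexg
  -- the weighted-sum inequality
  have hsum0 : ∑ i, p i (x i) * (f (x i) - f m) = 0 := by
    have hPv : (∑ i, p i (x i)) * vf = ∑ i, p i (x i) * f (x i) := by
      rw [hvf]; field_simp
    simp only [mul_sub]
    rw [Finset.sum_sub_distrib, ← Finset.sum_mul, hfm]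
    linarith [hPv]
  have hterm : ∀ i, q i (x i) * (g (x i) - g m) =
      (q i (x i) / (∑ j, q j (x i))) * ((∑ j, q j (x i)) * (g (x i) - g m) -
        g' m * (∑ j, q j m) / (f' m * (∑ j, p j m)) * ((∑ j, p j (x i)) * (f (x i) - f m))) +
      g' m * (∑ j, q j m) / (f' m * (∑ j, p j m)) * (p i (x i) * (f (x i) - f m)) := by
    intro i
    have hQne : (∑ j, q j (x i)) ≠ 0 := (hQ0pos _ (hxI i)).ne'
    have hfne : f' m ≠ 0 := hf'0 m hmI
    have hPmne : (∑ j, p j m) ≠ 0 := (hP0pos m hmI).ne'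
    have hri := hr' i (x i) (hxI i)
    field_simp
    linear_combination (-(g' m * (∑ j, q j m) * (f (x i) - f m))) * hri
  have hmain : (∑ i, q i (x i) * g (x i)) - g m * (∑ i, q i (x i)) =
      ∑ i, (q i (x i) / (∑ j, q j (x i))) * ((∑ j, q j (x i)) * (g (x i) - g m) -
        g' m * (∑ j, q j m) / (f' m * (∑ j, p j m)) * ((∑ j, p j (x i)) * (f (x i) - f m))) := by
    have h := Finset.sum_congr rfl (fun i (_ : i ∈ Finset.univ) => hterm i)
    rw [Finset.sum_add_distrib, ← Finset.mul_sum, hsum0, mul_zero, add_zero] at h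
    rw [← h]
    simp only [mul_sub]
    rw [Finset.sum_sub_distrib, ← Finset.sum_mul]
    ring
  have hge : 0 ≤ σg * ((∑ i, q i (x i) * g (x i)) - g m * (∑ i, q i (x i))) := by
    rw [hmain, Finset.mul_sum]
    apply Finset.sum_nonneg
    intro i _
    have h2 := hχnn m hmB (x i) (hx i)
    have h1 : 0 ≤ q i (x i) / (∑ j, q j (x i)) :=
      div_nonneg (hq i _ (hxI i)).le (hQ0pos _ (hxI i)).le
    have heq : σg * ((q i (x i) / (∑ j, q j (x i))) * ((∑ j, q j (x i)) * (g (x i) - g m) -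
        g' m * (∑ j, q j m) / (f' m * (∑ j, p j m)) * ((∑ j, p j (x i)) * (f (x i) - f m)))) =
        (q i (x i) / (∑ j, q j (x i))) * (σg * ((∑ j, q j (x i)) * (g (x i) - g m) -
        g' m * (∑ j, q j m) / (f' m * (∑ j, p j m)) * ((∑ j, p j (x i)) * (f (x i) - f m)))) := by
      ring
    rw [heq]
    exact mul_nonneg h1 h2
  have hQv : (∑ i, q i (x i)) * vg = ∑ i, q i (x i) * g (x i) := by
    rw [hvg]; field_simp
  have h3 : 0 ≤ (∑ i, q i (x i)) * (σg * vg - σg * g m) := by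
    have hQv2 : σg * ((∑ i, q i (x i)) * vg) = σg * (∑ i, q i (x i) * g (x i)) := by rw [hQv]
    nlinarith [hge, hQv2]
  have h4 : σg * g m ≤ σg * vg := by nlinarith [h3, hQsum]
  have hfin : m ≤ N := hginv m hmI N hNI (by rw [hgN]; exact h4)
  have e1 : bajMean I f p x = m := by
    simp only [bajMean]
    rfl
  have e2 : bajMean I g q x = N := by
    simp only [bajMean]
    rfl
  rw [e1, e2]
  exact hfin

/-- Theorem 1NC, sufficiency part: if `f, g` are twice continuously differentiable with
nonvanishing first derivatives, `p, q : I → ℝ₊ⁿ` are twice continuously differentiable,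
`pᵢ/p₀ = qᵢ/q₀` on `I` for all `i`, and `q₀²|g'|/(p₀²|f'|)` has an everywhere positive
derivative on `I`, then `A_{f,p}` is locally smaller than `A_{g,q}`. -/
theorem stmt7 {n : ℕ} (hn : 2 ≤ n) (I : Set ℝ) (hIopen : IsOpen I)
    (hIconn : I.OrdConnected) (hIne : I.Nonempty)
    (f f' f'' g g' g'' : ℝ → ℝ) (p p' p'' q q' q'' : Fin n → ℝ → ℝ)
    (hf : ∀ x ∈ I, HasDerivAt f (f' x) x) (hf2 : ∀ x ∈ I, HasDerivAt f' (f'' x) x)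
    (hf2c : ContinuousOn f'' I) (hf'0 : ∀ x ∈ I, f' x ≠ 0)
    (hg : ∀ x ∈ I, HasDerivAt g (g' x) x) (hg2 : ∀ x ∈ I, HasDerivAt g' (g'' x) x)
    (hg2c : ContinuousOn g'' I) (hg'0 : ∀ x ∈ I, g' x ≠ 0)
    (hp : ∀ i, ∀ x ∈ I, 0 < p i x) (hq : ∀ i, ∀ x ∈ I, 0 < q i x)
    (hpd : ∀ i, ∀ x ∈ I, HasDerivAt (p i) (p' i x) x)
    (hpd2 : ∀ i, ∀ x ∈ I, HasDerivAt (p' i) (p'' i x) x)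
    (hpd2c : ∀ i, ContinuousOn (p'' i) I)
    (hqd : ∀ i, ∀ x ∈ I, HasDerivAt (q i) (q' i x) x)
    (hqd2 : ∀ i, ∀ x ∈ I, HasDerivAt (q' i) (q'' i x) x)
    (hqd2c : ∀ i, ContinuousOn (q'' i) I)
    (hratio : ∀ i : Fin n, ∀ x ∈ I, p i x / (∑ j, p j x) = q i x / (∑ j, q j x))
    (hposder : ∀ x ∈ I, ∃ d : ℝ, 0 < d ∧
      HasDerivAt (fun y => (∑ j, q j y) ^ 2 * |g' y| / ((∑ j, p j y) ^ 2 * |f' y|)) d x) :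
    LocallySmaller I (bajMean I f p) (bajMean I g q) := by
  haveI hne : Nonempty (Fin n) := ⟨⟨0, by omega⟩⟩
  obtain ⟨a₀, ha₀⟩ := hIne
  have cf' : ContinuousOn f' I := fun x hx => (hf2 x hx).continuousAt.continuousWithinAt
  have cg' : ContinuousOn g' I := fun x hx => (hg2 x hx).continuousAt.continuousWithinAt
  obtain ⟨σf, hσf1, hσf⟩ := baj_sign_lemma hIconn cf' hf'0 ha₀
  obtain ⟨σg, hσg1, hσg⟩ := baj_sign_lemma hIconn cg' hg'0 ha₀
  have key := fun (a : ℝ) (ha : a ∈ I) =>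
    baj_key I hIopen hIconn f f' f'' g g' g'' p p' p'' q q' q''
      hf hf2 hf'0 hg hg2 hg'0 hp hq hpd hpd2 hpd2c hqd hqd2 hqd2c hratio hposder hf2c hg2c
      σf σg hσf1 hσg1 hσf hσg ha
  choose! δ hδpos hδsub hδkey using key
  refine ⟨⋃ a ∈ I, Set.pi Set.univ (fun _ : Fin n => Ioo (a - δ a) (a + δ a)), ?_, ?_, ?_, ?_⟩
  · exact isOpen_biUnion (fun a _ => isOpen_set_pi Set.finite_univ (fun _ _ => isOpen_Ioo))
  · intro x hxU
    simp only [Set.mem_iUnion] at hxU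
    obtain ⟨a, ha, hx⟩ := hxU
    intro i
    exact hδsub a ha (hx i (Set.mem_univ i))
  · intro x hxI
    simp only [Set.mem_iUnion]
    refine ⟨x, hxI, fun i _ => Set.mem_Ioo.mpr ⟨?_, ?_⟩⟩ <;> linarith [hδpos x hxI]
  · intro x hxU
    simp only [Set.mem_iUnion] at hxU
    obtain ⟨a, ha, hx⟩ := hxU
    exact hδkey a ha x (fun i => hx i (Set.mem_univ i))
end

section
/- Let I ⊆ (0,∞) be a nonempty open interval, let f, g : I → ℝ be differentiable with nowhere vanishing first derivatives, let n ≥ 2, let λ_1,…,λ_n, μ_1,…,μ_n > 0 and α_1,…,α_n, β_1,…,β_n ∈ ℝ, and define p_i(x) := λ_i x^{α_i} and q_i(x) := μ_i x^{β_i} for i ∈ {1,…,n} and x ∈ I. If A_{f,p} is locally smaller than A_{g,q}, then there exist γ > 0 and δ ∈ ℝ such that μ_i = γ λ_i and β_i = α_i + δ for all i ∈ {1,…,n}. -/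
open Set Function Real

/-- Two-point rigidity for power functions: if `c x^a = d x^b` at two distinct positive
points, with `c, d > 0`, then `a = b` and `c = d`. -/
private lemma two_point_rpow {x y c d a b : ℝ} (hx : 0 < x) (hy : 0 < y) (hxy : x < y)
    (hc : 0 < c) (hd : 0 < d)
    (h1 : c * x ^ a = d * x ^ b) (h2 : c * y ^ a = d * y ^ b) :
    a = b ∧ c = d := by
  have lx : Real.log (c * x ^ a) = Real.log (d * x ^ b) := by rw [h1]
  have ly : Real.log (c * y ^ a) = Real.log (d * y ^ b) := by rw [h2]
  rw [Real.log_mul hc.ne' (Real.rpow_pos_of_pos hx a).ne',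
      Real.log_mul hd.ne' (Real.rpow_pos_of_pos hx b).ne',
      Real.log_rpow hx, Real.log_rpow hx] at lx
  rw [Real.log_mul hc.ne' (Real.rpow_pos_of_pos hy a).ne',
      Real.log_mul hd.ne' (Real.rpow_pos_of_pos hy b).ne',
      Real.log_rpow hy, Real.log_rpow hy] at ly
  have hlog : Real.log x < Real.log y := Real.log_lt_log hx hxy
  have hab : a = b := by
    by_contra hne
    have h3 : (a - b) * Real.log x = (a - b) * Real.log y := by linarith
    have := mul_left_cancel₀ (sub_ne_zero.2 hne) h3
    exact absurd this hlog.ne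
  refine ⟨hab, ?_⟩
  subst hab
  exact mul_right_cancel₀ (Real.rpow_pos_of_pos hx a).ne' h1

/-- The image of an open order-connected set under a strictly monotone continuous map
is a neighborhood of each of its points. -/
private lemma image_mem_nhds_aux {I : Set ℝ} (hIopen : IsOpen I) (hIconn : I.OrdConnected)
    {f : ℝ → ℝ} (hfc : ContinuousOn f I) (hmono : StrictMonoOn f I ∨ StrictAntiOn f I)
    {x : ℝ} (hx : x ∈ I) : f '' I ∈ nhds (f x) := by
  obtain ⟨ε, hε, hball⟩ := Metric.isOpen_iff.1 hIopen x hx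
  have hsub : Set.Icc (x - ε / 2) (x + ε / 2) ⊆ I := by
    apply hIconn.out (hball ?_) (hball ?_) <;>
      (rw [Real.ball_eq_Ioo]; constructor <;> linarith)
  have ha : x - ε / 2 ∈ I := hsub ⟨le_refl _, by linarith⟩
  have hb : x + ε / 2 ∈ I := hsub ⟨by linarith, le_refl _⟩
  have hle : x - ε / 2 ≤ x + ε / 2 := by linarith
  have hIoosub : Set.Ioo (x - ε / 2) (x + ε / 2) ⊆ I := fun z hz => hsub ⟨hz.1.le, hz.2.le⟩
  rcases hmono with hm | hm
  · have h1 : f (x - ε / 2) < f x := hm ha hx (by linarith)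
    have h2 : f x < f (x + ε / 2) := hm hx hb (by linarith)
    have := intermediate_value_Ioo hle (hfc.mono hsub)
    exact Filter.mem_of_superset (IsOpen.mem_nhds isOpen_Ioo ⟨h1, h2⟩)
      (this.trans (Set.image_mono hIoosub))
  · have h1 : f (x + ε / 2) < f x := hm hx hb (by linarith)
    have h2 : f x < f (x - ε / 2) := hm ha hx (by linarith)
    have := intermediate_value_Ioo' hle (hfc.mono hsub)
    exact Filter.mem_of_superset (IsOpen.mem_nhds isOpen_Ioo ⟨h1, h2⟩)
      (this.trans (Set.image_mono hIoosub))

/-- Continuity of the inverse of a strictly monotone continuous function on an open set. -/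
private lemma invFunOn_continuousAt_aux {I : Set ℝ} (hIopen : IsOpen I)
    {f : ℝ → ℝ} (hfc : ContinuousOn f I) (hinj : Set.InjOn f I)
    (hmono : StrictMonoOn f I ∨ StrictAntiOn f I)
    {x : ℝ} (hx : x ∈ I) : ContinuousAt (Function.invFunOn f I) (f x) := by
  have hfx : Function.invFunOn f I (f x) = x := hinj.leftInvOn_invFunOn hx
  rw [ContinuousAt, hfx, Filter.tendsto_def]
  intro V hV
  have hVI : V ∩ I ∈ nhds x := Filter.inter_mem hV (hIopen.mem_nhds hx)
  obtain ⟨ε, hε, hball⟩ := Metric.mem_nhds_iff.1 hVI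
  set J := Metric.ball x ε with hJ
  have hJI : J ⊆ I := fun z hz => (hball hz).2
  have hJopen : IsOpen J := Metric.isOpen_ball
  have hJconn : J.OrdConnected := by rw [hJ, Real.ball_eq_Ioo]; exact Set.ordConnected_Ioo
  have hxJ : x ∈ J := Metric.mem_ball_self hε
  have := image_mem_nhds_aux hJopen hJconn (hfc.mono hJI)
    (hmono.imp (fun h => h.mono hJI) (fun h => h.mono hJI)) hxJ
  refine Filter.mem_of_superset this ?_
  rintro _ ⟨z, hz, rfl⟩
  have : Function.invFunOn f I (f z) = z := hinj.leftInvOn_invFunOn (hJI hz)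
  simpa [this] using (hball hz).1

/-- Derivative of a sum in which only the `i`-th coordinate varies. -/
private lemma hasDerivAt_sum_update {n : ℕ} (i : Fin n) (h : Fin n → ℝ → ℝ) {h' x : ℝ}
    (hd : HasDerivAt (h i) h' x) :
    HasDerivAt (fun t => ∑ j, h j (Function.update (fun _ => x) i t j)) h' x := by
  have key : ∀ t, (∑ j, h j (Function.update (fun _ => x) i t j))
      = ∑ j, (if j = i then h i t else h j x) := by
    intro t
    refine Finset.sum_congr rfl fun j _ => ?_
    by_cases hj : j = i <;> simp [Function.update_apply, hj]
  have hsum : HasDerivAt (fun t => ∑ j, (if j = i then h i t else h j x))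
      (∑ j, (if j = i then h' else 0)) x := by
    apply HasDerivAt.fun_sum
    intro j _
    by_cases hj : j = i
    · subst hj; simpa using hd
    · simpa [hj] using hasDerivAt_const x (h j x)
  simp only [key]
  simpa using hsum

/-- Main analytic lemma: the value and the `i`-th partial derivative (as a one-variable
derivative through the diagonal point) of a generalized Bajraktarević mean with power
weight functions. -/
private lemma mean_key {n : ℕ} [Nonempty (Fin n)] {I : Set ℝ} (hIopen : IsOpen I)
    (hIconn : I.OrdConnected) (hIpos : I ⊆ Set.Ioi (0:ℝ))
    {f f' : ℝ → ℝ} (hf : ∀ x ∈ I, HasDerivAt f (f' x) x) (hf'0 : ∀ x ∈ I, f' x ≠ 0)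
    (lam al : Fin n → ℝ) (hlam : ∀ i, 0 < lam i) (i : Fin n) {x : ℝ} (hx : x ∈ I) :
    bajMean I f (fun i x => lam i * x ^ al i) (fun _ => x) = x ∧
    HasDerivAt (fun t => bajMean I f (fun i x => lam i * x ^ al i)
        (Function.update (fun _ => x) i t))
      (lam i * x ^ al i / ∑ j, lam j * x ^ al j) x := by
  have hx0 : (0:ℝ) < x := hIpos hx
  have hfc : ContinuousOn f I := fun z hz => (hf z hz).continuousAt.continuousWithinAt
  have hconv : Convex ℝ I := hIconn.convex
  have hderiv : ∀ z ∈ I, deriv f z = f' z := fun z hz => (hf z hz).deriv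
  have hmono : StrictMonoOn f I ∨ StrictAntiOn f I := by
    rcases hasDerivWithinAt_forall_lt_or_forall_gt_of_forall_ne hconv
        (fun z hz => (hf z hz).hasDerivWithinAt) (m := 0) hf'0 with h | h
    · right
      apply strictAntiOn_of_deriv_neg hconv hfc
      intro z hz
      rw [hIopen.interior_eq] at hz
      rw [hderiv z hz]; exact h z hz
    · left
      apply strictMonoOn_of_deriv_pos hconv hfc
      intro z hz
      rw [hIopen.interior_eq] at hz
      rw [hderiv z hz]; exact h z hz
  have hinj : Set.InjOn f I := hmono.elim (fun h => h.injOn) (fun h => h.injOn)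
  have hS : (0:ℝ) < ∑ j, lam j * x ^ al j :=
    Finset.sum_pos (fun j _ => mul_pos (hlam j) (Real.rpow_pos_of_pos hx0 _))
      Finset.univ_nonempty
  have hlinv : Function.invFunOn f I (f x) = x := hinj.leftInvOn_invFunOn hx
  have hdiag : bajMean I f (fun i x => lam i * x ^ al i) (fun _ => x) = x := by
    unfold bajMean
    rw [show (∑ j, lam j * x ^ al j * f x) = (∑ j, lam j * x ^ al j) * f x from
      (Finset.sum_mul _ _ _).symm]
    rw [mul_div_cancel_left₀ _ hS.ne']
    exact hlinv
  refine ⟨hdiag, ?_⟩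
  have hpi : HasDerivAt (fun y => lam i * y ^ al i) (lam i * (al i * x ^ (al i - 1))) x :=
    (Real.hasDerivAt_rpow_const (Or.inl hx0.ne')).const_mul (lam i)
  have hD : HasDerivAt (fun t => ∑ j, lam j * (Function.update (fun _ => x) i t j) ^ al j)
      (lam i * (al i * x ^ (al i - 1))) x :=
    hasDerivAt_sum_update i (fun j y => lam j * y ^ al j) hpi
  have hNi : HasDerivAt (fun y => lam i * y ^ al i * f y)
      (lam i * (al i * x ^ (al i - 1)) * f x + lam i * x ^ al i * f' x) x :=
    hpi.mul (hf x hx)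
  have hN : HasDerivAt (fun t => ∑ j, lam j * (Function.update (fun _ => x) i t j) ^ al j
        * f (Function.update (fun _ => x) i t j))
      (lam i * (al i * x ^ (al i - 1)) * f x + lam i * x ^ al i * f' x) x :=
    hasDerivAt_sum_update i (fun j y => lam j * y ^ al j * f y) hNi
  have hDx : (∑ j, lam j * (Function.update (fun _ => x) i x j) ^ al j)
      = ∑ j, lam j * x ^ al j := by
    refine Finset.sum_congr rfl fun j _ => ?_
    simp [Function.update_apply]
  have hNx : (∑ j, lam j * (Function.update (fun _ => x) i x j) ^ al j
        * f (Function.update (fun _ => x) i x j))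
      = (∑ j, lam j * x ^ al j) * f x := by
    rw [show ((∑ j, lam j * x ^ al j) * f x) = ∑ j, lam j * x ^ al j * f x from
      Finset.sum_mul _ _ _]
    refine Finset.sum_congr rfl fun j _ => ?_
    simp [Function.update_apply]
  have hF := hN.fun_div hD (by simpa only [hDx] using hS.ne')
  have hev : ∀ᶠ y in nhds (f x), f (Function.invFunOn f I y) = y :=
    Filter.eventually_of_mem (image_mem_nhds_aux hIopen hIconn hfc hmono hx)
      (fun y hy => Function.invFunOn_eq (by rcases hy with ⟨z, hz, rfl⟩; exact ⟨z, hz, rfl⟩))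
  have hInv : HasDerivAt (Function.invFunOn f I) (f' x)⁻¹ (f x) :=
    HasDerivAt.of_local_left_inverse (invFunOn_continuousAt_aux hIopen hfc hinj hmono hx)
      (by rw [hlinv]; exact hf x hx) (hf'0 x hx) hev
  have hFx : (∑ j, lam j * (Function.update (fun _ => x) i x j) ^ al j
        * f (Function.update (fun _ => x) i x j))
      / (∑ j, lam j * (Function.update (fun _ => x) i x j) ^ al j) = f x := by
    rw [hNx, hDx, mul_div_cancel_left₀ _ hS.ne']
  have hInv' : HasDerivAt (Function.invFunOn f I) (f' x)⁻¹
      ((fun t => (∑ j, lam j * (Function.update (fun _ => x) i t j) ^ al j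
        * f (Function.update (fun _ => x) i t j))
      / (∑ j, lam j * (Function.update (fun _ => x) i t j) ^ al j)) x) := by
    simpa only [hFx] using hInv
  have hcomp := hInv'.comp x hF
  have heq : (fun t => bajMean I f (fun i x => lam i * x ^ al i)
      (Function.update (fun _ => x) i t))
      = (Function.invFunOn f I) ∘ (fun t =>
        (∑ j, lam j * (Function.update (fun _ => x) i t j) ^ al j
          * f (Function.update (fun _ => x) i t j))
        / (∑ j, lam j * (Function.update (fun _ => x) i t j) ^ al j)) := rfl
  rw [heq]
  refine hcomp.congr_deriv ?_
  simp only [hNx, hDx]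
  field_simp [hS.ne', hf'0 x hx]
  ring

/-- Corollary LCp, necessity of the parameter relations: with power weight functions
`pᵢ(x) = λᵢ x^{αᵢ}`, `qᵢ(x) = μᵢ x^{βᵢ}` on `I ⊆ (0,∞)`, if `A_{f,p}` is locally
smaller than `A_{g,q}`, then there exist `γ > 0` and `δ ∈ ℝ` with `μᵢ = γλᵢ` and
`βᵢ = αᵢ + δ` for all `i`. -/
theorem stmt8 {n : ℕ} (hn : 2 ≤ n) (I : Set ℝ) (hIopen : IsOpen I)
    (hIconn : I.OrdConnected) (hIne : I.Nonempty) (hIpos : I ⊆ Set.Ioi (0 : ℝ))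
    (f f' g g' : ℝ → ℝ)
    (hf : ∀ x ∈ I, HasDerivAt f (f' x) x) (hf'0 : ∀ x ∈ I, f' x ≠ 0)
    (hg : ∀ x ∈ I, HasDerivAt g (g' x) x) (hg'0 : ∀ x ∈ I, g' x ≠ 0)
    (lam mu : Fin n → ℝ) (al be : Fin n → ℝ)
    (hlam : ∀ i, 0 < lam i) (hmu : ∀ i, 0 < mu i)
    (hloc : LocallySmaller I (bajMean I f (fun i x => lam i * x ^ al i))
      (bajMean I g (fun i x => mu i * x ^ be i))) :
    ∃ γ : ℝ, 0 < γ ∧ ∃ δ : ℝ, ∀ i : Fin n, mu i = γ * lam i ∧ be i = al i + δ := by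
  have hne : Nonempty (Fin n) := ⟨⟨0, by omega⟩⟩
  obtain ⟨U, hUopen, hUsub, hUdiag, hUle⟩ := hloc
  have hSpos : ∀ x ∈ I, (0:ℝ) < ∑ j, lam j * x ^ al j := fun x hx =>
    Finset.sum_pos (fun j _ => mul_pos (hlam j) (Real.rpow_pos_of_pos (hIpos hx) _))
      Finset.univ_nonempty
  have hTpos : ∀ x ∈ I, (0:ℝ) < ∑ j, mu j * x ^ be j := fun x hx =>
    Finset.sum_pos (fun j _ => mul_pos (hmu j) (Real.rpow_pos_of_pos (hIpos hx) _))
      Finset.univ_nonempty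
  -- Step 1: equality of the first-order partial derivatives on the diagonal.
  have key : ∀ x ∈ I, ∀ i : Fin n,
      mu i * x ^ be i / (∑ j, mu j * x ^ be j)
        = lam i * x ^ al i / (∑ j, lam j * x ^ al j) := by
    intro x hx i
    obtain ⟨hMdiag, hMder⟩ := mean_key hIopen hIconn hIpos hf hf'0 lam al hlam i hx
    obtain ⟨hNdiag, hNder⟩ := mean_key hIopen hIconn hIpos hg hg'0 mu be hmu i hx
    have hux : Function.update (fun _ : Fin n => x) i x = fun _ => x := by
      ext j; simp [Function.update_apply]
    have hu : Continuous (fun t : ℝ => Function.update (fun _ : Fin n => x) i t) :=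
      continuous_const.update i continuous_id
    have hevU : ∀ᶠ t in nhds x, Function.update (fun _ : Fin n => x) i t ∈ U := by
      have h1 : (fun t : ℝ => Function.update (fun _ : Fin n => x) i t) ⁻¹' U ∈ nhds x := by
        apply hu.continuousAt.preimage_mem_nhds
        rw [hux]
        exact hUopen.mem_nhds (hUdiag x hx)
      exact h1
    have hmin : IsLocalMin (fun t =>
        bajMean I g (fun i x => mu i * x ^ be i) (Function.update (fun _ => x) i t)
        - bajMean I f (fun i x => lam i * x ^ al i) (Function.update (fun _ => x) i t)) x := by
      refine hevU.mono fun t ht => ?_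
      simp only [hux, hNdiag, hMdiag, sub_self]
      exact sub_nonneg.2 (hUle _ ht)
    have hd := hNder.sub hMder
    have h0 := hmin.hasDerivAt_eq_zero hd
    exact sub_eq_zero.1 h0
  -- Step 2: cross-multiplied pairwise relation.
  set i0 : Fin n := ⟨0, by omega⟩ with hi0
  have pair : ∀ x ∈ I, ∀ i : Fin n,
      (mu i * lam i0) * x ^ (be i + al i0) = (mu i0 * lam i) * x ^ (be i0 + al i) := by
    intro x hx i
    have hx0 : (0:ℝ) < x := hIpos hx
    have hS := hSpos x hx
    have hT := hTpos x hx
    have e1 : mu i * x ^ be i * (∑ j, lam j * x ^ al j)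
        = lam i * x ^ al i * (∑ j, mu j * x ^ be j) :=
      (div_eq_div_iff hT.ne' hS.ne').1 (key x hx i)
    have e2 : mu i0 * x ^ be i0 * (∑ j, lam j * x ^ al j)
        = lam i0 * x ^ al i0 * (∑ j, mu j * x ^ be j) :=
      (div_eq_div_iff hT.ne' hS.ne').1 (key x hx i0)
    have e4 : (mu i * x ^ be i) * (lam i0 * x ^ al i0)
        = (mu i0 * x ^ be i0) * (lam i * x ^ al i) := by
      have hmul := congrArg₂ (· * ·) e1 e2.symm
      have hST : (∑ j, lam j * x ^ al j) * (∑ j, mu j * x ^ be j) ≠ 0 :=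
         (mul_pos hS hT).ne'
      apply mul_right_cancel₀ hST
      linear_combination hmul
    rw [Real.rpow_add hx0, Real.rpow_add hx0]
    linear_combination e4
  -- Step 3: two-point rigidity.
  obtain ⟨x, hx⟩ := hIne
  obtain ⟨ε, hε, hball⟩ := Metric.isOpen_iff.1 hIopen x hx
  have hy : x + ε / 2 ∈ I := hball (by rw [Real.ball_eq_Ioo]; constructor <;> linarith)
  have hx0 : (0:ℝ) < x := hIpos hx
  have hy0 : (0:ℝ) < x + ε / 2 := by linarith
  refine ⟨mu i0 / lam i0, div_pos (hmu i0) (hlam i0), be i0 - al i0, fun i => ?_⟩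
  obtain ⟨hab, hcd⟩ := two_point_rpow hx0 hy0 (by linarith)
    (mul_pos (hmu i) (hlam i0)) (mul_pos (hmu i0) (hlam i))
    (pair x hx i) (pair (x + ε / 2) hy i)
  constructor
  · rw [div_mul_eq_mul_div, eq_div_iff (hlam i0).ne']
    linear_combination hcd
  · linarith [hab]
end

section
/- Let I ⊆ (0,∞) be a nonempty open interval, let f, g : I → ℝ be twice differentiable with nowhere vanishing first derivatives, let n ≥ 2, let λ_1,…,λ_n, μ_1,…,μ_n > 0 and α_1,…,α_n, β_1,…,β_n ∈ ℝ, and define p_i(x) := λ_i x^{α_i} and q_i(x) := μ_i x^{β_i} for i ∈ {1,…,n} and x ∈ I. If A_{f,p} is locally smaller than A_{g,q} and there exist γ > 0 and δ ∈ ℝ such that μ_i = γ λ_i and β_i = α_i + δ for all i, then the function x ↦ x^{2δ} |g'(x)| / |f'(x)| is increasing on I. -/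
open Set Function Real

section Helpers
open Filter

private lemma derivSign (I : Set ℝ) (hconv : Convex ℝ I) (h' : ℝ → ℝ)
    (hcont : ContinuousOn h' I) (hne : ∀ x ∈ I, h' x ≠ 0) :
    (∀ x ∈ I, 0 < h' x) ∨ (∀ x ∈ I, h' x < 0) := by
  by_contra hcon
  push_neg at hcon
  obtain ⟨⟨a, ha, ha'⟩, ⟨b, hb, hb'⟩⟩ := hcon
  have hsub : Set.uIcc a b ⊆ I := (hconv.ordConnected).uIcc_subset ha hb
  have h0 : (0:ℝ) ∈ Set.uIcc (h' a) (h' b) := Set.Icc_subset_uIcc ⟨ha', hb'⟩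
  have := intermediate_value_uIcc (hcont.mono hsub) h0
  obtain ⟨c, hc, hc0⟩ := this
  exact hne c (hsub hc) hc0

private lemma injOn_of_deriv_ne (I : Set ℝ) (hIopen : IsOpen I) (hconv : Convex ℝ I)
    (h h' : ℝ → ℝ) (hh : ∀ x ∈ I, HasDerivAt h (h' x) x)
    (hcont : ContinuousOn h' I) (hne : ∀ x ∈ I, h' x ≠ 0) : Set.InjOn h I := by
  have hContOn : ContinuousOn h I := fun x hx => (hh x hx).continuousAt.continuousWithinAt
  rcases derivSign I hconv h' hcont hne with hpos | hneg
  · refine (strictMonoOn_of_deriv_pos hconv hContOn ?_).injOn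
    intro x hx
    rw [hIopen.interior_eq] at hx
    rw [(hh x hx).deriv]
    exact hpos x hx
  · refine (strictAntiOn_of_deriv_neg hconv hContOn ?_).injOn
    intro x hx
    rw [hIopen.interior_eq] at hx
    rw [(hh x hx).deriv]
    exact hneg x hx

private lemma second_deriv_nonneg (Φ Φ' : ℝ → ℝ) (ε K : ℝ) (hε : 0 < ε)
    (hd : ∀ t, |t| < ε → HasDerivAt Φ (Φ' t) t) (hpos : ∀ t, |t| < ε → 0 ≤ Φ t)
    (h0 : Φ 0 = 0) (h'0 : Φ' 0 = 0) (hK : HasDerivAt Φ' K 0) : 0 ≤ K := by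
  by_contra hneg
  push_neg at hneg
  have hslope : Tendsto (slope Φ' 0) (nhdsWithin 0 {(0:ℝ)}ᶜ) (nhds K) :=
    hasDerivAt_iff_tendsto_slope.mp hK
  have hev : ∀ᶠ t in nhdsWithin 0 {(0:ℝ)}ᶜ, slope Φ' 0 t < 0 :=
    hslope.eventually_lt_const hneg
  have hball : ∀ᶠ t in nhdsWithin 0 {(0:ℝ)}ᶜ, |t| < ε := by
    refine Filter.Eventually.filter_mono nhdsWithin_le_nhds ?_
    simpa using eventually_abs_sub_lt (0:ℝ) hε
  have hev2 := hev.and hball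
  rw [eventually_nhdsWithin_iff] at hev2
  obtain ⟨r, hr, hprop⟩ := Metric.eventually_nhds_iff.mp hev2
  set ρ := min (r/2) (ε/2) with hρdef
  have hρ : 0 < ρ := lt_min (by linarith) (by linarith)
  have hIcc : ∀ t ∈ Set.Icc (0:ℝ) ρ, |t| < ε := by
    intro t ht
    rw [abs_of_nonneg ht.1]
    calc t ≤ ρ := ht.2
    _ ≤ ε/2 := min_le_right _ _
    _ < ε := by linarith
  have hanti : StrictAntiOn Φ (Set.Icc 0 ρ) := by
    refine strictAntiOn_of_deriv_neg (convex_Icc 0 ρ)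
      (fun t ht => (hd t (hIcc t ht)).continuousAt.continuousWithinAt) ?_
    intro t ht
    rw [interior_Icc] at ht
    have htε : |t| < ε := hIcc t ⟨ht.1.le, ht.2.le⟩
    rw [(hd t htε).deriv]
    have htr : dist t 0 < r := by
      rw [Real.dist_eq, sub_zero, abs_of_pos ht.1]
      calc t < ρ := ht.2
      _ ≤ r/2 := min_le_left _ _
      _ < r := by linarith
    have hsl := (hprop htr (by simp [ht.1.ne'])).1
    have : Φ' t = slope Φ' 0 t * t := by
      rw [slope_def_field, h'0, sub_zero, sub_zero,
        div_mul_cancel₀ _ ht.1.ne']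
    rw [this]
    exact mul_neg_of_neg_of_pos hsl ht.1
  have h1 : Φ ρ < Φ 0 := hanti ⟨le_rfl, hρ.le⟩ ⟨hρ.le, le_rfl⟩ hρ
  have h2 : 0 ≤ Φ ρ := hpos ρ (hIcc ρ ⟨hρ.le, le_rfl⟩)
  rw [h0] at h1
  linarith


private lemma aux_mean (I : Set ℝ) (hIopen : IsOpen I) (hIpos : I ⊆ Set.Ioi (0:ℝ))
    (f f' f'' : ℝ → ℝ)
    (hf : ∀ x ∈ I, HasDerivAt f (f' x) x) (hf2 : ∀ x ∈ I, HasDerivAt f' (f'' x) x)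
    (hf'0 : ∀ x ∈ I, f' x ≠ 0) (hinj : Set.InjOn f I)
    (x : ℝ) (hx : x ∈ I) (c a S : ℝ) (hc : 0 < c) (hS : 0 < S) :
    ∃ (ε : ℝ) (m m' : ℝ → ℝ), 0 < ε ∧ m 0 = x ∧
      m' 0 = c * x ^ a / (c * x ^ a + S) ∧
      (∀ t, |t| < ε → x + t ∈ I ∧ HasDerivAt m (m' t) t ∧
        Function.invFunOn f I ((c * (x+t) ^ a * f (x+t) + S * f x) / (c * (x+t) ^ a + S)) = m t) ∧
      HasDerivAt m' ((c * x ^ a / (c * x ^ a + S)) * (1 - c * x ^ a / (c * x ^ a + S)) *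
        (2 * a / x + f'' x / f' x)) 0 := by
  have hx0 : 0 < x := hIpos hx
  -- strict derivative at x and local inverse
  have hfev : ∀ᶠ y in nhds x, HasDerivAt f (f' y) y :=
    (hIopen.eventually_mem hx).mono fun y hy => hf y hy
  have hs : HasStrictDerivAt f (f' x) x :=
    hasStrictDerivAt_of_hasDerivAt_of_continuousAt hfev (hf2 x hx).continuousAt
  have hsE := hs.hasStrictFDerivAt_equiv (hf'0 x hx)
  set e := hsE.toOpenPartialHomeomorph f with he
  have hec : (e : ℝ → ℝ) = f := hsE.toOpenPartialHomeomorph_coe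
  have hxsrc : x ∈ e.source := hsE.mem_toOpenPartialHomeomorph_source
  have hfxtgt : f x ∈ e.target := by
    have := e.map_source hxsrc
    rwa [hec] at this
  have hsymmfx : e.symm (f x) = x := by
    have := e.left_inv hxsrc
    rwa [hec] at this
  set V : Set ℝ := e.target ∩ e.symm ⁻¹' I with hV
  have hVopen : IsOpen V := e.continuousOn_symm.isOpen_inter_preimage e.open_target hIopen
  have hfxV : f x ∈ V := ⟨hfxtgt, by simp only [Set.mem_preimage, hsymmfx]; exact hx⟩
  have hφ : ∀ y ∈ V, e.symm y ∈ I ∧ f (e.symm y) = y ∧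
      HasDerivAt e.symm (f' (e.symm y))⁻¹ y := by
    intro y hy
    refine ⟨hy.2, ?_, ?_⟩
    · have := e.right_inv hy.1
      rwa [hec] at this
    · refine HasDerivAt.of_local_left_inverse (e.continuousAt_symm hy.1)
        (hf _ hy.2) (hf'0 _ hy.2) ?_
      refine (e.open_target.eventually_mem hy.1).mono fun z hz => ?_
      have := e.right_inv hz
      rwa [hec] at this
  -- the scalar functions
  set W : ℝ → ℝ := fun t => c * (x+t) ^ a / (c * (x+t) ^ a + S) with hWdef
  set Wd : ℝ → ℝ := fun t => c * a * (x+t) ^ (a-1) * S / (c * (x+t) ^ a + S)^2 with hWddef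
  set E : ℝ → ℝ := fun t => f (x+t) - f x with hEdef
  set Fn : ℝ → ℝ := fun t => f x + W t * E t with hFndef
  set Fd : ℝ → ℝ := fun t => Wd t * E t + W t * f' (x+t) with hFddef
  set m : ℝ → ℝ := fun t => e.symm (Fn t) with hmdef
  set m' : ℝ → ℝ := fun t => (f' (m t))⁻¹ * Fd t with hm'def
  -- basic positivity and derivative facts for t with x+t ∈ I
  have hgen : ∀ t : ℝ, x + t ∈ I →
      (0 < x + t) ∧ (0 < c * (x+t) ^ a + S) ∧ HasDerivAt W (Wd t) t ∧
      HasDerivAt E (f' (x+t)) t ∧ HasDerivAt Fn (Fd t) t := by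
    intro t ht
    have hxt : 0 < x + t := hIpos ht
    have hPpos : 0 < c * (x+t) ^ a := mul_pos hc (Real.rpow_pos_of_pos hxt a)
    have hPS : 0 < c * (x+t) ^ a + S := by linarith
    have hxt1 : HasDerivAt (fun s : ℝ => x + s) 1 t := by
      simpa using (hasDerivAt_id t).const_add x
    have hrp : HasDerivAt (fun s : ℝ => (x+s) ^ a) (1 * a * (x+t) ^ (a-1)) t :=
      hxt1.rpow_const (Or.inl hxt.ne')
    have hP : HasDerivAt (fun s : ℝ => c * (x+s) ^ a) (c * (1 * a * (x+t) ^ (a-1))) t :=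
      hrp.const_mul c
    have hW : HasDerivAt W (Wd t) t := by
      have h1 : HasDerivAt W _ t := hP.div (hP.add_const S) hPS.ne'
      have h2 : c * (1 * a * (x+t) ^ (a-1)) * (c * (x+t) ^ a + S) -
          c * (x+t) ^ a * (c * (1 * a * (x+t) ^ (a-1))) = c * a * (x+t) ^ (a-1) * S := by ring
      convert h1 using 1
      show c * a * (x+t) ^ (a-1) * S / (c * (x+t) ^ a + S)^2 = _
      rw [← h2]
    have hE : HasDerivAt E (f' (x+t)) t := by
      have h1 := (hf (x+t) ht).comp t hxt1
      have h2 : HasDerivAt E _ t := h1.sub_const (f x)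
      simpa using h2
    have hFn : HasDerivAt Fn (Fd t) t := (hW.mul hE).const_add (f x)
    exact ⟨hxt, hPS, hW, hE, hFn⟩
  have hx0I : x + 0 ∈ I := by simpa using hx
  have hE0 : E 0 = 0 := by simp [hEdef]
  have hFn0 : Fn 0 = f x := by simp [hFndef, hE0]
  have hW0 : W 0 = c * x ^ a / (c * x ^ a + S) := by simp [hWdef]
  -- choose ε
  have hevt : ∀ᶠ t in nhds (0:ℝ), x + t ∈ I ∧ Fn t ∈ V := by
    have hfn0 : HasDerivAt Fn (Fd 0) 0 := (hgen 0 hx0I).2.2.2.2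
    have h1 : ∀ᶠ t in nhds (0:ℝ), x + t ∈ I := by
      have hc1 : ContinuousAt (fun t : ℝ => x + t) 0 := by fun_prop
      have := hc1.eventually_mem (hIopen.mem_nhds hx0I)
      exact this
    have h2 : ∀ᶠ t in nhds (0:ℝ), Fn t ∈ V :=
      hfn0.continuousAt.eventually_mem (hVopen.mem_nhds (hFn0 ▸ hfxV))
    exact h1.and h2
  obtain ⟨ε, hε, hball⟩ := Metric.eventually_nhds_iff.mp hevt
  have hballt : ∀ t : ℝ, |t| < ε → x + t ∈ I ∧ Fn t ∈ V := by
    intro t ht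
    exact hball (by simpa [Real.dist_eq] using ht)
  have hm0 : m 0 = x := by rw [hmdef]; simp only [hFn0]; exact hsymmfx
  -- the main per-t facts
  have hmain : ∀ t : ℝ, |t| < ε → x + t ∈ I ∧ HasDerivAt m (m' t) t ∧
      Function.invFunOn f I ((c * (x+t) ^ a * f (x+t) + S * f x) / (c * (x+t) ^ a + S)) = m t := by
    intro t ht
    obtain ⟨hxtI, hFnV⟩ := hballt t ht
    obtain ⟨hxt, hPS, hW, hE, hFn⟩ := hgen t hxtI
    obtain ⟨hmI, hfm, hdφ⟩ := hφ (Fn t) hFnV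
    refine ⟨hxtI, ?_, ?_⟩
    · have h1 := hdφ.comp t hFn
      exact h1
    · have hform : (c * (x+t) ^ a * f (x+t) + S * f x) / (c * (x+t) ^ a + S) = Fn t := by
        rw [hFndef]
        simp only [hWdef, hEdef]
        field_simp
        ring
      rw [hform, ← hfm]
      exact hinj.leftInvOn_invFunOn hmI
  have hm'0 : m' 0 = c * x ^ a / (c * x ^ a + S) := by
    have hFd0 : Fd 0 = W 0 * f' x := by simp [hFddef, hE0]
    rw [hm'def]
    simp only [hFd0, hm0, hW0]
    field_simp [hf'0 x hx]
  -- second derivative at 0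
  have hm0d : HasDerivAt m (c * x ^ a / (c * x ^ a + S)) 0 := by
    have := (hmain 0 (by simpa using hε)).2.1
    rwa [hm'0] at this
  have hPS0 : 0 < c * x ^ a + S := by
    have := mul_pos hc (Real.rpow_pos_of_pos hx0 a); linarith
  have hfm0 : HasDerivAt (fun t => f' (m t)) (f'' x * (c * x ^ a / (c * x ^ a + S))) 0 := by
    have h4 : HasDerivAt f' (f'' x) (m 0) := by rw [hm0]; exact hf2 x hx
    have := h4.comp 0 hm0d
    exact this
  have hinv : HasDerivAt (fun t => (f' (m t))⁻¹)
      (-(f'' x * (c * x ^ a / (c * x ^ a + S))) / (f' x)^2) 0 := by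
    have := hfm0.inv (by rw [hm0]; exact hf'0 x hx)
    rwa [hm0] at this
  -- derivative of Wd at 0 (value irrelevant)
  have hxt0 : HasDerivAt (fun s : ℝ => x + s) 1 0 := by
    simpa using (hasDerivAt_id (0:ℝ)).const_add x
  have hx00 : (x:ℝ) + 0 = x := add_zero x
  have hx0ne : x + 0 ≠ 0 := by rw [hx00]; exact hx0.ne'
  have hnum : HasDerivAt (fun s : ℝ => c * a * (x+s) ^ (a-1) * S)
      ((1 * (a-1) * (x+0) ^ (a-1-1)) * (c * a) * S) 0 := by
    have h1 : HasDerivAt (fun s : ℝ => (x+s) ^ (a-1)) (1 * (a-1) * (x+0) ^ (a-1-1)) 0 :=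
      hxt0.rpow_const (Or.inl hx0ne)
    have : HasDerivAt (fun s : ℝ => c * a * (x+s) ^ (a-1) * S) _ 0 :=
      (h1.const_mul (c * a)).mul_const S
    convert this using 1
    ring
  have hP0 : HasDerivAt (fun s : ℝ => c * (x+s) ^ a) (c * (1 * a * (x+0) ^ (a-1))) 0 :=
    (hxt0.rpow_const (Or.inl hx0ne)).const_mul c
  have hden2 : HasDerivAt (fun s : ℝ => (c * (x+s) ^ a + S)^2)
      (2 * (c * (x+0) ^ a + S)^(2-1) * (c * (1 * a * (x+0) ^ (a-1)))) 0 := by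
    exact (hP0.add_const S).pow 2
  have hden2ne : (c * (x+0) ^ a + S)^2 ≠ 0 := by
    rw [hx00]; exact pow_ne_zero 2 hPS0.ne'
  have hWdd : HasDerivAt Wd
      (((1 * (a-1) * (x+0) ^ (a-1-1)) * (c * a) * S * (c * (x+0) ^ a + S)^2 -
        c * a * (x+0) ^ (a-1) * S * (2 * (c * (x+0) ^ a + S)^(2-1) * (c * (1 * a * (x+0) ^ (a-1)))))
        / ((c * (x+0) ^ a + S)^2)^2) 0 :=
    hnum.div hden2 hden2ne
  have hE0d : HasDerivAt E (f' (x+0)) 0 := (hgen 0 hx0I).2.2.2.1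
  have hW0d : HasDerivAt W (Wd 0) 0 := (hgen 0 hx0I).2.2.1
  have hEdd : HasDerivAt (fun t => f' (x+t)) (f'' x * 1) 0 := by
    have h4 : HasDerivAt f' (f'' x) (x + 0) := by rw [hx00]; exact hf2 x hx
    have := h4.comp 0 hxt0
    exact this
  have hFdd : HasDerivAt Fd
      ((((1 * (a-1) * (x+0) ^ (a-1-1)) * (c * a) * S * (c * (x+0) ^ a + S)^2 -
        c * a * (x+0) ^ (a-1) * S * (2 * (c * (x+0) ^ a + S)^(2-1) * (c * (1 * a * (x+0) ^ (a-1)))))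
        / ((c * (x+0) ^ a + S)^2)^2) * E 0 + Wd 0 * f' (x+0) +
        (Wd 0 * f' (x+0) + W 0 * (f'' x * 1))) 0 := by
    exact (hWdd.mul hE0d).add (hW0d.mul hEdd)
  have hFd0 : Fd 0 = c * x ^ a / (c * x ^ a + S) * f' x := by
    rw [hFddef]; simp only [hE0, mul_zero, zero_add, hx00, hW0]
  have htot : HasDerivAt m' _ 0 := hinv.mul hFdd
  refine ⟨ε, m, m', hε, hm0, hm'0, hmain, ?_⟩
  have hWd0 : Wd 0 = c * a * x ^ (a-1) * S / (c * x ^ a + S)^2 := by simp [hWddef]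
  convert htot using 1
  rw [hE0, hFd0, hWd0, hm0, hW0, hx00]
  simp only [mul_zero, zero_add]
  rw [Real.rpow_sub_one hx0.ne' a]
  field_simp [hx0.ne', hPS0.ne', hf'0 x hx]
  ring

private lemma stepB (I : Set ℝ) (hIopen : IsOpen I) (hconv : Convex ℝ I)
    (hIpos : I ⊆ Set.Ioi (0:ℝ)) (f' f'' g' g'' : ℝ → ℝ)
    (hf2 : ∀ x ∈ I, HasDerivAt f' (f'' x) x) (hg2 : ∀ x ∈ I, HasDerivAt g' (g'' x) x)
    (sf sg : ℝ) (hsf : sf = 1 ∨ sf = -1) (hsg : sg = 1 ∨ sg = -1)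
    (hfpos : ∀ x ∈ I, 0 < sf * f' x) (hgpos : ∀ x ∈ I, 0 < sg * g' x)
    (δ : ℝ)
    (key : ∀ x ∈ I, 0 ≤ 2 * δ / x + g'' x / g' x - f'' x / f' x) :
    MonotoneOn (fun x => x ^ (2 * δ) * |g' x| / |f' x|) I := by
  have hgabs : ∀ x ∈ I, |g' x| = sg * g' x := by
    intro x hx
    have h0 := hgpos x hx
    rcases hsg with rfl | rfl
    · rw [one_mul]
      rw [one_mul] at h0
      exact abs_of_pos h0
    · have h1 : g' x < 0 := by linarith
      rw [abs_of_neg h1]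
      ring
  have hfabs : ∀ x ∈ I, |f' x| = sf * f' x := by
    intro x hx
    have h0 := hfpos x hx
    rcases hsf with rfl | rfl
    · rw [one_mul]
      rw [one_mul] at h0
      exact abs_of_pos h0
    · have h1 : f' x < 0 := by linarith
      rw [abs_of_neg h1]
      ring
  have hg'ne : ∀ x ∈ I, g' x ≠ 0 := fun x hx => right_ne_zero_of_mul (hgpos x hx).ne'
  have hf'ne : ∀ x ∈ I, f' x ≠ 0 := fun x hx => right_ne_zero_of_mul (hfpos x hx).ne'
  have hRd : ∀ z ∈ I, HasDerivAt (fun x => x ^ (2 * δ) * (sg * g' x) / (sf * f' x))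
      ((z ^ (2 * δ) * (sg * g' z) / (sf * f' z)) *
        (2 * δ / z + g'' z / g' z - f'' z / f' z)) z := by
    intro z hz
    have hz0 : 0 < z := hIpos hz
    have h1 : HasDerivAt (fun x : ℝ => x ^ (2 * δ)) (2 * δ * z ^ (2 * δ - 1)) z :=
      Real.hasDerivAt_rpow_const (Or.inl hz0.ne')
    have h2 := (hg2 z hz).const_mul sg
    have h3 := (hf2 z hz).const_mul sf
    have h4 : HasDerivAt (fun x => x ^ (2 * δ) * (sg * g' x) / (sf * f' x)) _ z :=
      (h1.mul h2).div h3 (hfpos z hz).ne'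
    convert h4 using 1
    simp only [Pi.mul_apply]
    rw [Real.rpow_sub_one hz0.ne']
    have hfz := hf'ne z hz
    have hgz := hg'ne z hz
    rcases hsf with rfl | rfl <;> rcases hsg with rfl | rfl <;>
      · field_simp <;>
        ring
  have hmono : MonotoneOn (fun x => x ^ (2 * δ) * (sg * g' x) / (sf * f' x)) I := by
    refine monotoneOn_of_deriv_nonneg hconv
      (fun z hz => (hRd z hz).continuousAt.continuousWithinAt) ?_ ?_
    · rw [hIopen.interior_eq]
      exact fun z hz => (hRd z hz).differentiableAt.differentiableWithinAt
    · rw [hIopen.interior_eq]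
      intro z hz
      rw [(hRd z hz).deriv]
      refine mul_nonneg ?_ (key z hz)
      have hz0 : 0 < z := hIpos hz
      exact (div_pos (mul_pos (Real.rpow_pos_of_pos hz0 _) (hgpos z hz)) (hfpos z hz)).le
  intro a ha b hb hab
  have h := hmono ha hb hab
  simp only [] at h ⊢
  rwa [hgabs a ha, hfabs a ha, hgabs b hb, hfabs b hb]

end Helpers

/-- Corollary LCp, second-order necessary condition: with power weight functions
`pᵢ(x) = λᵢ x^{αᵢ}`, `qᵢ(x) = μᵢ x^{βᵢ}` on `I ⊆ (0,∞)`, `f, g` twice differentiable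
with nonvanishing first derivatives, if `A_{f,p}` is locally smaller than `A_{g,q}` and
`μᵢ = γλᵢ`, `βᵢ = αᵢ + δ` for all `i` (with `γ > 0`), then `x ↦ x^{2δ}|g'(x)|/|f'(x)|`
is increasing on `I`. -/
theorem stmt9 {n : ℕ} (hn : 2 ≤ n) (I : Set ℝ) (hIopen : IsOpen I)
    (hIconn : I.OrdConnected) (hIne : I.Nonempty) (hIpos : I ⊆ Set.Ioi (0 : ℝ))
    (f f' f'' g g' g'' : ℝ → ℝ)
    (hf : ∀ x ∈ I, HasDerivAt f (f' x) x) (hf2 : ∀ x ∈ I, HasDerivAt f' (f'' x) x)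
    (hf'0 : ∀ x ∈ I, f' x ≠ 0)
    (hg : ∀ x ∈ I, HasDerivAt g (g' x) x) (hg2 : ∀ x ∈ I, HasDerivAt g' (g'' x) x)
    (hg'0 : ∀ x ∈ I, g' x ≠ 0)
    (lam mu : Fin n → ℝ) (al be : Fin n → ℝ)
    (hlam : ∀ i, 0 < lam i) (hmu : ∀ i, 0 < mu i)
    (hloc : LocallySmaller I (bajMean I f (fun i x => lam i * x ^ al i))
      (bajMean I g (fun i x => mu i * x ^ be i)))
    (γ δ : ℝ) (hγ : 0 < γ)
    (hrel : ∀ i : Fin n, mu i = γ * lam i ∧ be i = al i + δ) :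
    MonotoneOn (fun x => x ^ (2 * δ) * |g' x| / |f' x|) I := by
  have hconv : Convex ℝ I := hIconn.convex
  have hfcont : ContinuousOn f' I := fun z hz => (hf2 z hz).continuousAt.continuousWithinAt
  have hgcont : ContinuousOn g' I := fun z hz => (hg2 z hz).continuousAt.continuousWithinAt
  have hinjf : Set.InjOn f I := injOn_of_deriv_ne I hIopen hconv f f' hf hfcont hf'0
  have hinjg : Set.InjOn g I := injOn_of_deriv_ne I hIopen hconv g g' hg hgcont hg'0
  -- the pointwise second-order inequality
  have key : ∀ x ∈ I, 0 ≤ 2 * δ / x + g'' x / g' x - f'' x / f' x := by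
    intro x hx
    have hx0 : 0 < x := hIpos hx
    set i₀ : Fin n := ⟨0, by omega⟩ with hi₀
    have hi1 : (⟨1, by omega⟩ : Fin n) ≠ i₀ := by simp [hi₀, Fin.ext_iff]
    set Sf : ℝ := ∑ i ∈ Finset.univ.erase i₀, lam i * x ^ al i with hSfdef
    set Sg : ℝ := ∑ i ∈ Finset.univ.erase i₀, mu i * x ^ be i with hSgdef
    have hSf : 0 < Sf :=
      Finset.sum_pos (fun i _ => mul_pos (hlam i) (Real.rpow_pos_of_pos hx0 _))
        ⟨⟨1, by omega⟩, Finset.mem_erase.mpr ⟨hi1, Finset.mem_univ _⟩⟩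
    have hSg : 0 < Sg :=
      Finset.sum_pos (fun i _ => mul_pos (hmu i) (Real.rpow_pos_of_pos hx0 _))
        ⟨⟨1, by omega⟩, Finset.mem_erase.mpr ⟨hi1, Finset.mem_univ _⟩⟩
    have hSgSf : Sg = γ * x ^ δ * Sf := by
      rw [hSgdef, hSfdef, Finset.mul_sum]
      refine Finset.sum_congr rfl fun i _ => ?_
      rw [(hrel i).1, (hrel i).2, Real.rpow_add hx0]
      ring
    obtain ⟨εf, mf, mf', hεf, hmf0, hmf'0, hmainf, hDf⟩ :=
      aux_mean I hIopen hIpos f f' f'' hf hf2 hf'0 hinjf x hx (lam i₀) (al i₀) Sf (hlam i₀) hSf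
    obtain ⟨εg, mg, mg', hεg, hmg0, hmg'0, hmaing, hDg⟩ :=
      aux_mean I hIopen hIpos g g' g'' hg hg2 hg'0 hinjg x hx (mu i₀) (be i₀) Sg (hmu i₀) hSg
    have hmu0 : mu i₀ * x ^ be i₀ = γ * x ^ δ * (lam i₀ * x ^ al i₀) := by
      rw [(hrel i₀).1, (hrel i₀).2, Real.rpow_add hx0]; ring
    have hwg : mu i₀ * x ^ be i₀ / (mu i₀ * x ^ be i₀ + Sg)
        = lam i₀ * x ^ al i₀ / (lam i₀ * x ^ al i₀ + Sf) := by
      rw [hmu0, hSgSf, ← mul_add, mul_div_mul_left _ _ (by positivity)]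
    obtain ⟨U, hUopen, hUsub, hUdiag, hUle⟩ := hloc
    have hvcont : Continuous (fun t : ℝ => Function.update (fun _ : Fin n => x) i₀ (x + t)) :=
      continuous_const.update i₀ (continuous_const.add continuous_id)
    have hv0 : Function.update (fun _ : Fin n => x) i₀ (x + 0) = (fun _ : Fin n => x) := by
      funext i
      rcases eq_or_ne i i₀ with h | h
      · subst h; simp
      · simp [Function.update_of_ne h]
    have hU0 : Function.update (fun _ : Fin n => x) i₀ (x + 0) ∈ U := by
      rw [hv0]; exact hUdiag x hx
    have hevU : ∀ᶠ t in nhds (0:ℝ),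
        Function.update (fun _ : Fin n => x) i₀ (x + t) ∈ U :=
      hvcont.continuousAt.eventually_mem (hUopen.mem_nhds hU0)
    obtain ⟨εU, hεU, hballU⟩ := Metric.eventually_nhds_iff.mp hevU
    set ε : ℝ := min εf (min εg εU) with hεdef
    have hε : 0 < ε := lt_min hεf (lt_min hεg hεU)
    have hcomp : ∀ t, |t| < ε → 0 ≤ mg t - mf t := by
      intro t ht
      have htf : |t| < εf := lt_of_lt_of_le ht (min_le_left _ _)
      have htg : |t| < εg := lt_of_lt_of_le ht ((min_le_right _ _).trans (min_le_left _ _))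
      have htU : |t| < εU := lt_of_lt_of_le ht ((min_le_right _ _).trans (min_le_right _ _))
      set v : Fin n → ℝ := Function.update (fun _ : Fin n => x) i₀ (x + t) with hvdef
      have hvU : v ∈ U := hballU (by simpa [Real.dist_eq] using htU)
      have hle := hUle v hvU
      have hvi₀ : v i₀ = x + t := by
        rw [hvdef]; exact Function.update_self _ _ _
      have hvi : ∀ i, i ≠ i₀ → v i = x := fun i h => by
        rw [hvdef]; exact Function.update_of_ne h _ _
      have hnumf : ∑ i, lam i * v i ^ al i * f (v i)
          = lam i₀ * (x+t) ^ al i₀ * f (x+t) + Sf * f x := by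
        rw [← Finset.add_sum_erase Finset.univ _ (Finset.mem_univ i₀), hvi₀, hSfdef,
          Finset.sum_mul]
        congr 1
        refine Finset.sum_congr rfl fun i hi => ?_
        rw [hvi i (Finset.mem_erase.mp hi).1]
      have hdenf : ∑ i, lam i * v i ^ al i = lam i₀ * (x+t) ^ al i₀ + Sf := by
        rw [← Finset.add_sum_erase Finset.univ _ (Finset.mem_univ i₀), hvi₀, hSfdef]
        congr 1
        refine Finset.sum_congr rfl fun i hi => ?_
        rw [hvi i (Finset.mem_erase.mp hi).1]
      have hnumg : ∑ i, mu i * v i ^ be i * g (v i)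
          = mu i₀ * (x+t) ^ be i₀ * g (x+t) + Sg * g x := by
        rw [← Finset.add_sum_erase Finset.univ _ (Finset.mem_univ i₀), hvi₀, hSgdef,
          Finset.sum_mul]
        congr 1
        refine Finset.sum_congr rfl fun i hi => ?_
        rw [hvi i (Finset.mem_erase.mp hi).1]
      have hdeng : ∑ i, mu i * v i ^ be i = mu i₀ * (x+t) ^ be i₀ + Sg := by
        rw [← Finset.add_sum_erase Finset.univ _ (Finset.mem_univ i₀), hvi₀, hSgdef]
        congr 1
        refine Finset.sum_congr rfl fun i hi => ?_
        rw [hvi i (Finset.mem_erase.mp hi).1]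
      have heqf : bajMean I f (fun i x => lam i * x ^ al i) v = mf t := by
        show Function.invFunOn f I
          ((∑ i, lam i * v i ^ al i * f (v i)) / (∑ i, lam i * v i ^ al i)) = mf t
        rw [hnumf, hdenf]
        exact (hmainf t htf).2.2
      have heqg : bajMean I g (fun i x => mu i * x ^ be i) v = mg t := by
        show Function.invFunOn g I
          ((∑ i, mu i * v i ^ be i * g (v i)) / (∑ i, mu i * v i ^ be i)) = mg t
        rw [hnumg, hdeng]
        exact (hmaing t htg).2.2
      rw [heqf, heqg] at hle
      linarith
    have hΦd : ∀ t, |t| < ε → HasDerivAt (fun s => mg s - mf s) (mg' t - mf' t) t := by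
      intro t ht
      exact ((hmaing t (lt_of_lt_of_le ht ((min_le_right _ _).trans (min_le_left _ _)))).2.1).sub
        ((hmainf t (lt_of_lt_of_le ht (min_le_left _ _))).2.1)
    have hΦ0 : mg 0 - mf 0 = 0 := by rw [hmg0, hmf0, sub_self]
    have hΦ'0 : mg' 0 - mf' 0 = 0 := by rw [hmg'0, hmf'0, hwg, sub_self]
    have hK := hDg.sub hDf
    have h2nd := second_deriv_nonneg (fun s => mg s - mf s) (fun s => mg' s - mf' s) ε _ hε
      hΦd hcomp hΦ0 hΦ'0 hK
    rw [hwg] at h2nd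
    set w : ℝ := lam i₀ * x ^ al i₀ / (lam i₀ * x ^ al i₀ + Sf) with hwdef
    have hwpos : 0 < w * (1 - w) := by
      have hA : 0 < lam i₀ * x ^ al i₀ := mul_pos (hlam i₀) (Real.rpow_pos_of_pos hx0 _)
      have hw1 : 0 < w := div_pos hA (by linarith)
      have hw2 : w < 1 := (div_lt_one (by linarith)).mpr (by linarith)
      nlinarith
    have hfactor : w * (1 - w) * (2 * be i₀ / x + g'' x / g' x)
        - w * (1 - w) * (2 * al i₀ / x + f'' x / f' x)
        = (w * (1 - w)) * (2 * δ / x + g'' x / g' x - f'' x / f' x) := by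
      rw [(hrel i₀).2]
      field_simp
      ring
    rw [hfactor] at h2nd
    exact (mul_nonneg_iff_of_pos_left hwpos).mp h2nd
  -- sign constants
  have hF : ∃ sf : ℝ, (sf = 1 ∨ sf = -1) ∧ ∀ x ∈ I, 0 < sf * f' x := by
    rcases derivSign I hconv f' hfcont hf'0 with h | h
    · exact ⟨1, Or.inl rfl, fun x hx => by simpa using h x hx⟩
    · exact ⟨-1, Or.inr rfl, fun x hx => by
        have := h x hx; nlinarith⟩
  have hG : ∃ sg : ℝ, (sg = 1 ∨ sg = -1) ∧ ∀ x ∈ I, 0 < sg * g' x := by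
    rcases derivSign I hconv g' hgcont hg'0 with h | h
    · exact ⟨1, Or.inl rfl, fun x hx => by simpa using h x hx⟩
    · exact ⟨-1, Or.inr rfl, fun x hx => by
        have := h x hx; nlinarith⟩
  obtain ⟨sf, hsf, hfpos⟩ := hF
  obtain ⟨sg, hsg, hgpos⟩ := hG
  exact stepB I hIopen hconv hIpos f' f'' g' g'' hf2 hg2 sf sg hsf hsg hfpos hgpos δ key
end
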